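/- arXiv:2212.14831 — 2 statements merged into one kernel-verified Lean document; each statement's English description precedes it below -/
import Mathlib

section
/- For any n ≥ 1, the cardinality of NC(S_n, c), the interval [e, c] in the absolute order on S_n for a standard Coxeter element c, equals the Catalan number C_n = (1/(n+1)) binom(2n, n). -/
/-- The adjacent transposition `sᵢ = (i, i+1)` in the symmetric group on `Fin (n+1)`. -/
def adjSwap (n : ℕ) (i : Fin n) : Equiv.Perm (Fin (n+1)) :=
  Equiv.swap i.castSucc i.succ

/-- `c` is a standard Coxeter element of `S_{n+1}`. -/
def IsStdCoxeter (n : ℕ) (c : Equiv.Perm (Fin (n+1))) : Prop :=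
  ∃ l : List (Fin n), l.Nodup ∧ (∀ i, i ∈ l) ∧ c = (l.map (adjSwap n)).prod

/-- The absolute (reflection) length of a permutation. -/
noncomputable def absLen {n : ℕ} (w : Equiv.Perm (Fin n)) : ℕ :=
  sInf {k | ∃ l : List (Equiv.Perm (Fin n)), l.length = k ∧
    (∀ t ∈ l, ∃ a b, a ≠ b ∧ t = Equiv.swap a b) ∧ w = l.prod}

/-- The absolute order. -/
def absLe {n : ℕ} (v w : Equiv.Perm (Fin n)) : Prop :=
  absLen w = absLen v + absLen (v⁻¹ * w)

open Equiv Equiv.Perm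

namespace NCAux

variable {α : Type*} [Fintype α] [DecidableEq α]

/-- Reflection length candidate: support size minus number of cycles. -/
def fl (w : Perm α) : ℕ := w.support.card - w.cycleType.card

/-- fl-version of the absolute order. -/
def absLeF (v w : Perm α) : Prop := fl w = fl v + fl (v⁻¹ * w)

lemma multiset_card_le_sum (s : Multiset ℕ) (h : ∀ x ∈ s, 1 ≤ x) :
    Multiset.card s ≤ s.sum := by
  induction s using Multiset.induction_on with
  | empty => simp
  | cons a s ih =>
    simp only [Multiset.card_cons, Multiset.sum_cons]
    have h1 := h a (Multiset.mem_cons_self a s)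
    have h2 := ih (fun x hx => h x (Multiset.mem_cons_of_mem hx))
    omega

lemma card_cycleType_le_sum (w : Perm α) :
    Multiset.card w.cycleType ≤ w.cycleType.sum :=
  multiset_card_le_sum _ fun x hx => le_trans (by norm_num) (two_le_of_mem_cycleType hx)

lemma key (w : Perm α) : Multiset.card w.cycleType + fl w = w.support.card := by
  have h := card_cycleType_le_sum w
  rw [sum_cycleType] at h
  unfold fl; omega

@[simp] lemma fl_one : fl (1 : Perm α) = 0 := by simp [fl]

lemma fl_swap {a b : α} (h : a ≠ b) : fl (Equiv.swap a b) = 1 := by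
  have h1 := key (Equiv.swap a b)
  have h2 : (Equiv.swap a b).cycleType = {2} := by
    rw [(isCycle_swap h).cycleType, card_support_swap h]
  rw [card_support_swap h, h2] at h1
  simp only [Multiset.card_singleton] at h1
  omega

lemma fl_eq_zero_iff {w : Perm α} : fl w = 0 ↔ w = 1 := by
  constructor
  · intro h
    have h1 := key w
    have hsum := sum_cycleType w
    rw [h, add_zero] at h1
    -- so card cycleType = sum cycleType
    by_contra hne
    have h3 : w.cycleType ≠ 0 := fun hh => hne (cycleType_eq_zero.mp hh)
    obtain ⟨n, hn⟩ := Multiset.exists_mem_of_ne_zero h3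
    have h4 : 2 ≤ n := two_le_of_mem_cycleType hn
    obtain ⟨s, hs⟩ := Multiset.exists_cons_of_mem hn
    have h5 : Multiset.card s ≤ s.sum := by
      refine multiset_card_le_sum _ fun x hx => ?_
      have : x ∈ w.cycleType := by rw [hs]; exact Multiset.mem_cons_of_mem hx
      exact le_trans (by norm_num) (two_le_of_mem_cycleType this)
    rw [hs] at h1 hsum
    simp only [Multiset.sum_cons, Multiset.card_cons] at h1 hsum
    omega
  · rintro rfl; simp

lemma fl_inv (w : Perm α) : fl w⁻¹ = fl w := by
  simp [fl, cycleType_inv, support_inv]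

lemma fl_isCycle {w : Perm α} (h : IsCycle w) : fl w + 1 = w.support.card := by
  have h1 := key w
  rw [h.cycleType] at h1
  simp only [Multiset.coe_singleton, Multiset.card_singleton] at h1
  omega

lemma fl_mul_disjoint {u v : Perm α} (h : Perm.Disjoint u v) :
    fl (u * v) = fl u + fl v := by
  have h1 := key (u * v)
  have h2 := key u
  have h3 := key v
  rw [h.cycleType_mul, h.support_mul,
    Finset.card_union_of_disjoint (disjoint_iff_disjoint_support.mp h)] at h1
  simp only [Multiset.card_add] at h1
  omega

lemma fl_lt_support {w : Perm α} (h : w ≠ 1) : fl w + 1 ≤ w.support.card := by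
  have h1 := key w
  have h2 : w.cycleType ≠ 0 := fun hh => h (cycleType_eq_zero.mp hh)
  have h3 : 1 ≤ Multiset.card w.cycleType := by
    rcases Multiset.exists_mem_of_ne_zero h2 with ⟨n, hn⟩
    exact Multiset.card_pos_iff_exists_mem.mpr ⟨n, hn⟩
  omega

lemma sign_fl (w : Perm α) : Perm.sign w = (-1 : ℤˣ) ^ (fl w) := by
  have h1 := key w
  have h2 : w.cycleType.sum = w.support.card := sum_cycleType w
  rw [sign_of_cycleType]
  have : w.cycleType.sum + Multiset.card w.cycleType
      = fl w + 2 * Multiset.card w.cycleType := by omega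
  rw [this, pow_add, pow_mul]
  simp

section Decomp

lemma fl_le_of_card {σ : Perm α} {k : ℕ} (h : σ.support.card ≤ k + 1) : fl σ ≤ k := by
  by_cases h1 : σ = 1
  · subst h1; simp
  · have := fl_lt_support h1; omega

lemma sameCycle_mem_support {w : Perm α} {a b : α} (h : w.SameCycle a b) (hab : a ≠ b) :
    a ∈ w.support := by
  rw [mem_support]
  intro hfix
  obtain ⟨i, hi⟩ := h
  rw [zpow_apply_eq_self_of_apply_eq_self hfix] at hi
  exact hab hi

lemma cycleOf_compl_apply (w : Perm α) (x y : α) :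
    ((w.cycleOf x)⁻¹ * w) y = if w.SameCycle x y then y else w y := by
  have hy' : w.SameCycle y (w y) := ⟨1, by simp⟩
  by_cases h : w.SameCycle x y
  · rw [if_pos h]
    have h1 : w.cycleOf x y = w y := h.cycleOf_apply
    simp only [mul_apply]
    rw [← h1, Perm.inv_def, Equiv.symm_apply_apply]
  · rw [if_neg h]
    have h2 : ¬ w.SameCycle x (w y) := fun hh => h (hh.trans hy'.symm)
    have h1 : w.cycleOf x (w y) = w y := cycleOf_apply_of_not_sameCycle h2
    simp only [mul_apply]
    nth_rewrite 1 [← h1]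
    rw [Perm.inv_def, Equiv.symm_apply_apply]

lemma cycleOf_decomp_disjoint (w : Perm α) (x : α) :
    Perm.Disjoint (w.cycleOf x) ((w.cycleOf x)⁻¹ * w) := by
  intro y
  by_cases h : w.SameCycle x y
  · right; rw [cycleOf_compl_apply, if_pos h]
  · left; exact cycleOf_apply_of_not_sameCycle h

lemma cycleOf_decomp (w : Perm α) (x : α) : w = w.cycleOf x * ((w.cycleOf x)⁻¹ * w) := by
  rw [mul_inv_cancel_left]

lemma support_cycleOf_compl_le (w : Perm α) (x : α) :
    ((w.cycleOf x)⁻¹ * w).support ⊆ w.support := by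
  intro y hy
  rw [mem_support, cycleOf_compl_apply] at hy
  split_ifs at hy with h
  · exact absurd rfl hy
  · exact mem_support.mpr hy

lemma mem_support_cycleOf_compl {w : Perm α} {x y : α} (h : ¬ w.SameCycle x y)
    (hy : y ∈ w.support) : y ∈ ((w.cycleOf x)⁻¹ * w).support := by
  rw [mem_support, cycleOf_compl_apply, if_neg h]
  exact mem_support.mp hy

lemma fl_swap_mul_of_sameCycle {w : Perm α} {a b : α} (h : w.SameCycle a b) (hab : a ≠ b) :
    fl (Equiv.swap a b * w) ≤ fl w := by
  have ha : a ∈ w.support := sameCycle_mem_support h hab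
  set γ := w.cycleOf a with hγdef
  set z := γ⁻¹ * w with hzdef
  have hγ : IsCycle γ := isCycle_cycleOf w (mem_support.mp ha)
  have hprod : w = γ * z := cycleOf_decomp w a
  have hdisj : Perm.Disjoint γ z := cycleOf_decomp_disjoint w a
  have hsuppt : (Equiv.swap a b).support ⊆ γ.support := by
    rw [support_swap hab]
    intro y hy
    simp only [Finset.mem_insert, Finset.mem_singleton] at hy
    rcases hy with rfl | rfl
    · exact mem_support_cycleOf_iff.mpr ⟨Perm.SameCycle.refl _ _, ha⟩
    · exact mem_support_cycleOf_iff.mpr ⟨h, ha⟩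
  have hsub : (Equiv.swap a b * γ).support ⊆ γ.support := by
    refine subset_trans (support_mul_le _ _) ?_
    exact sup_le hsuppt (le_refl _)
  have hd2 : Perm.Disjoint (Equiv.swap a b * γ) z :=
    disjoint_iff_disjoint_support.mpr
      (Finset.disjoint_of_subset_left hsub (disjoint_iff_disjoint_support.mp hdisj))
  have e1 : Equiv.swap a b * w = (Equiv.swap a b * γ) * z := by
    rw [mul_assoc, ← hprod]
  rw [e1, fl_mul_disjoint hd2]
  have e2 := fl_mul_disjoint hdisj
  rw [← hprod] at e2
  have e3 : fl (Equiv.swap a b * γ) ≤ fl γ := by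
    refine fl_le_of_card ?_
    have h4 := fl_isCycle hγ
    have h5 := Finset.card_le_card hsub
    omega
  omega

lemma fl_swap_mul_le_aux {w : Perm α} {a b : α} (hab : a ≠ b) (ha : a ∈ w.support)
    (hn : ¬ w.SameCycle a b) : fl (Equiv.swap a b * w) ≤ fl w + 1 := by
  set γ := w.cycleOf a with hγdef
  set z := γ⁻¹ * w with hzdef
  have hγ : IsCycle γ := isCycle_cycleOf w (mem_support.mp ha)
  have hprod : w = γ * z := cycleOf_decomp w a
  have hdisj : Perm.Disjoint γ z := cycleOf_decomp_disjoint w a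
  have hflw : fl w = fl γ + fl z := by
    have h := fl_mul_disjoint hdisj; rw [← hprod] at h; exact h
  have haγ : a ∈ γ.support := mem_support_cycleOf_iff.mpr ⟨Perm.SameCycle.refl _ _, ha⟩
  have hγcard := fl_isCycle hγ
  have hzsupp := support_cycleOf_compl_le w a
  have hdsupp := disjoint_iff_disjoint_support.mp hdisj
  by_cases hb : b ∈ w.support
  · -- b is in another cycle of w
    have hbz : b ∈ z.support := mem_support_cycleOf_compl hn hb
    set δ := z.cycleOf b with hδdef
    set z₂ := δ⁻¹ * z with hz2def
    have hδ : IsCycle δ := isCycle_cycleOf z (mem_support.mp hbz)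
    have hprod2 : z = δ * z₂ := cycleOf_decomp z b
    have hdisj2 : Perm.Disjoint δ z₂ := cycleOf_decomp_disjoint z b
    have hflz : fl z = fl δ + fl z₂ := by
      have h := fl_mul_disjoint hdisj2; rw [← hprod2] at h; exact h
    have hδsupp : δ.support ⊆ z.support := support_cycleOf_le z b
    have hbδ : b ∈ δ.support := mem_support_cycleOf_iff.mpr ⟨Perm.SameCycle.refl _ _, hbz⟩
    have hδcard := fl_isCycle hδ
    have hz2supp := support_cycleOf_compl_le z b
    have hd2supp := disjoint_iff_disjoint_support.mp hdisj2
    have hkey : (Equiv.swap a b * (γ * δ)).support ⊆ γ.support ∪ δ.support := by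
      have h1 : (Equiv.swap a b).support ⊆ γ.support ∪ δ.support := by
        rw [support_swap hab]
        intro y hy
        simp only [Finset.mem_insert, Finset.mem_singleton] at hy
        rcases hy with rfl | rfl
        · exact Finset.mem_union_left _ haγ
        · exact Finset.mem_union_right _ hbδ
      have h2 : (γ * δ).support ⊆ γ.support ∪ δ.support := by
        refine le_trans (support_mul_le _ _) ?_
        exact sup_le Finset.subset_union_left Finset.subset_union_right
      refine le_trans (support_mul_le _ _) ?_
      exact sup_le h1 h2
    have hγδ : _root_.Disjoint γ.support δ.support :=
      Finset.disjoint_of_subset_right hδsupp hdsupp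
    have hcard : (γ.support ∪ δ.support).card = γ.support.card + δ.support.card :=
      Finset.card_union_of_disjoint hγδ
    have hfl1 : fl (Equiv.swap a b * (γ * δ)) ≤ fl γ + fl δ + 1 := by
      refine fl_le_of_card ?_
      have := Finset.card_le_card hkey
      omega
    have hzd : Perm.Disjoint (Equiv.swap a b * (γ * δ)) z₂ := by
      refine disjoint_iff_disjoint_support.mpr (Finset.disjoint_of_subset_left hkey ?_)
      rw [Finset.disjoint_union_left]
      exact ⟨Finset.disjoint_of_subset_right hz2supp hdsupp,
        (disjoint_iff_disjoint_support.mp hdisj2)⟩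
    have e1 : Equiv.swap a b * w = (Equiv.swap a b * (γ * δ)) * z₂ := by
      rw [hprod, hprod2]; group
    rw [e1, fl_mul_disjoint hzd]
    omega
  · -- b is fixed by w
    have hbγ : b ∉ γ.support := fun hh => hb (support_cycleOf_le w a hh)
    have hkey : (Equiv.swap a b * γ).support ⊆ insert b γ.support := by
      have h1 : (Equiv.swap a b).support ⊆ insert b γ.support := by
        rw [support_swap hab]
        intro y hy
        simp only [Finset.mem_insert, Finset.mem_singleton] at hy
        rcases hy with rfl | rfl
        · exact Finset.mem_insert_of_mem haγ
        · exact Finset.mem_insert_self _ _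
      refine le_trans (support_mul_le _ _) ?_
      exact sup_le h1 (Finset.subset_insert _ _)
    have hfl1 : fl (Equiv.swap a b * γ) ≤ fl γ + 1 := by
      refine fl_le_of_card ?_
      have h6 := Finset.card_le_card hkey
      have h7 := Finset.card_insert_le b γ.support
      omega
    have hzd : Perm.Disjoint (Equiv.swap a b * γ) z := by
      refine disjoint_iff_disjoint_support.mpr (Finset.disjoint_of_subset_left hkey ?_)
      rw [Finset.disjoint_insert_left]
      refine ⟨fun hh => hb (hzsupp hh), hdsupp⟩
    have e1 : Equiv.swap a b * w = (Equiv.swap a b * γ) * z := by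
      rw [hprod]; group
    rw [e1, fl_mul_disjoint hzd]
    omega

lemma fl_swap_mul_le {w : Perm α} {a b : α} (hab : a ≠ b) :
    fl (Equiv.swap a b * w) ≤ fl w + 1 := by
  by_cases hsc : w.SameCycle a b
  · exact le_trans (fl_swap_mul_of_sameCycle hsc hab) (by omega)
  · by_cases ha : a ∈ w.support
    · exact fl_swap_mul_le_aux hab ha hsc
    · by_cases hb : b ∈ w.support
      · rw [Equiv.swap_comm]
        exact fl_swap_mul_le_aux hab.symm hb (fun hh => hsc hh.symm)
      · have hd : Perm.Disjoint (Equiv.swap a b) w := by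
          intro y
          by_cases hy : y = a ∨ y = b
          · right
            rcases hy with rfl | rfl
            · exact notMem_support.mp ha
            · exact notMem_support.mp hb
          · push_neg at hy
            left
            exact Equiv.swap_apply_of_ne_of_ne hy.1 hy.2
        rw [fl_mul_disjoint hd, fl_swap hab]
        omega

lemma fl_le_fl_swap_mul {w : Perm α} {a b : α} (hab : a ≠ b) :
    fl w ≤ fl (Equiv.swap a b * w) + 1 := by
  have h := fl_swap_mul_le (w := Equiv.swap a b * w) hab
  rwa [← mul_assoc, Equiv.swap_mul_self, one_mul] at h

lemma eq_swap_of_apply_apply {γ : Perm α} {x : α} (hγ : IsCycle γ) (hx : γ x ≠ x)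
    (h2 : γ (γ x) = x) : γ = Equiv.swap x (γ x) := by
  have horb : ∀ n : ℕ, (γ ^ n) x = x ∨ (γ ^ n) x = γ x := by
    intro n
    induction n with
    | zero => left; simp
    | succ n ih =>
      rw [pow_succ', mul_apply]
      rcases ih with h | h <;> rw [h]
      · right; rfl
      · left; exact h2
  ext y
  by_cases hyx : y = x
  · subst hyx; rw [Equiv.swap_apply_left]
  by_cases hyγ : y = γ x
  · subst hyγ; rw [Equiv.swap_apply_right]; exact h2
  rw [Equiv.swap_apply_of_ne_of_ne hyx hyγ]
  by_contra hy
  have hsc : γ.SameCycle x y := hγ.sameCycle hx (fun hh => hy (by rw [hh]))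
  obtain ⟨i, _, hi⟩ := hsc.exists_pow_eq'
  rcases horb i with h | h <;> rw [hi] at h
  · exact hyx h
  · exact hyγ h

lemma fl_swap_mul_self_apply {w : Perm α} {x : α} (hx : x ∈ w.support) :
    fl (Equiv.swap x (w x) * w) + 1 = fl w := by
  set γ := w.cycleOf x with hγdef
  set z := γ⁻¹ * w with hzdef
  have hγ : IsCycle γ := isCycle_cycleOf w (mem_support.mp hx)
  have hprod : w = γ * z := cycleOf_decomp w x
  have hdisj : Perm.Disjoint γ z := cycleOf_decomp_disjoint w x
  have hflw : fl w = fl γ + fl z := by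
    have h := fl_mul_disjoint hdisj; rw [← hprod] at h; exact h
  have hγx : γ x = w x := cycleOf_apply_self w x
  have hxγ : x ∈ γ.support := mem_support_cycleOf_iff.mpr ⟨Perm.SameCycle.refl _ _, hx⟩
  have hγcard := fl_isCycle hγ
  have hxne : γ x ≠ x := by rw [hγx]; exact mem_support.mp hx
  have hswap : Equiv.swap x (w x) = Equiv.swap x (γ x) := by rw [hγx]
  have hdsupp := disjoint_iff_disjoint_support.mp hdisj
  by_cases h2 : γ (γ x) = x
  · have hγ2 : γ = Equiv.swap x (γ x) := eq_swap_of_apply_apply hγ hxne h2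
    have hss : Equiv.swap x (γ x) * γ = 1 := by
      conv_lhs => rw [hγ2]
      simp [Equiv.swap_apply_left, Equiv.swap_mul_self]
    have e1 : Equiv.swap x (w x) * w = z := by
      rw [hswap]
      conv_lhs => rw [hprod]
      rw [← mul_assoc, hss, one_mul]
    have hflγ : fl γ = 1 := by rw [hγ2]; exact fl_swap (Ne.symm hxne)
    rw [e1]
    omega
  · have hc : IsCycle (Equiv.swap x (γ x) * γ) := hγ.swap_mul hxne h2
    have hsupp : (Equiv.swap x (γ x) * γ).support = γ.support \ {x} :=
      support_swap_mul_eq γ x h2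
    have hccard := fl_isCycle hc
    have hcard2 : (γ.support \ {x}).card = γ.support.card - 1 := by
      rw [Finset.card_sdiff_of_subset (Finset.singleton_subset_iff.mpr hxγ), Finset.card_singleton]
    have hsub : (Equiv.swap x (γ x) * γ).support ⊆ γ.support := by
      rw [hsupp]; exact Finset.sdiff_subset
    have hzd : Perm.Disjoint (Equiv.swap x (γ x) * γ) z :=
      disjoint_iff_disjoint_support.mpr (Finset.disjoint_of_subset_left hsub hdsupp)
    have e1 : Equiv.swap x (w x) * w = (Equiv.swap x (γ x) * γ) * z := by
      rw [hswap, hprod]; group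
    rw [e1, fl_mul_disjoint hzd]
    rw [hsupp, hcard2] at hccard
    have hγ2 := hγ.two_le_card_support
    omega

lemma fl_swap_mul_cases {w : Perm α} {a b : α} (hab : a ≠ b) :
    fl (Equiv.swap a b * w) = fl w + 1 ∨ fl (Equiv.swap a b * w) + 1 = fl w := by
  have h1 := fl_swap_mul_le (w := w) hab
  have h2 := fl_le_fl_swap_mul (w := w) hab
  have hsign : Perm.sign (Equiv.swap a b * w) = - Perm.sign w := by
    rw [map_mul, sign_swap hab]; simp
  rw [sign_fl, sign_fl] at hsign
  have hne : fl (Equiv.swap a b * w) ≠ fl w := by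
    intro he
    rw [he] at hsign
    have h3 := congrArg (fun u : ℤˣ => (u : ℤ)) hsign
    simp only [Units.val_neg] at h3
    have h4 : ((-1 : ℤˣ) ^ fl w : ℤˣ) = (1 : ℤˣ) ∨ ((-1 : ℤˣ) ^ fl w : ℤˣ) = (-1 : ℤˣ) := by
      rcases Nat.even_or_odd (fl w) with he2 | he2
      · left; exact he2.neg_one_pow
      · right; exact he2.neg_one_pow
    rcases h4 with h4 | h4 <;> rw [h4] at h3 <;> norm_num at h3
  omega

end Decomp

section Words

def IsSwapList (l : List (Perm α)) : Prop := ∀ t ∈ l, ∃ a b, a ≠ b ∧ t = Equiv.swap a b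

lemma fl_prod_le (l : List (Perm α)) (hl : IsSwapList l) : fl l.prod ≤ l.length := by
  induction l with
  | nil => simp
  | cons t l ih =>
    obtain ⟨a, b, hab, ht⟩ := hl t List.mem_cons_self
    rw [List.prod_cons, ht]
    have h1 := fl_swap_mul_le (w := l.prod) hab
    have h2 := ih (fun u hu => hl u (List.mem_cons_of_mem _ hu))
    simp only [List.length_cons]
    omega

lemma exists_word (w : Perm α) :
    ∃ l : List (Perm α), IsSwapList l ∧ l.prod = w ∧ l.length = fl w := by
  generalize hn : fl w = n
  induction n generalizing w with
  | zero =>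
    have : w = 1 := fl_eq_zero_iff.mp hn
    subst this
    exact ⟨[], fun t ht => absurd ht (List.not_mem_nil), by simp, by simp [hn]⟩
  | succ n ih =>
    have hw : w ≠ 1 := by
      intro h; subst h; simp at hn
    have hne : w.support ≠ ∅ := fun hh => hw (support_eq_empty_iff.mp hh)
    obtain ⟨x, hx⟩ := Finset.nonempty_of_ne_empty hne
    have hstep := fl_swap_mul_self_apply hx
    rw [hn] at hstep
    obtain ⟨l, hsl, hp, hlen⟩ := ih (Equiv.swap x (w x) * w) (by omega)
    refine ⟨Equiv.swap x (w x) :: l, ?_, ?_, ?_⟩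
    · intro t ht
      rcases List.mem_cons.mp ht with rfl | ht'
      · exact ⟨x, w x, Ne.symm (mem_support.mp hx), rfl⟩
      · exact hsl t ht'
    · rw [List.prod_cons, hp, ← mul_assoc, Equiv.swap_mul_self, one_mul]
    · simp [hlen]

lemma fl_mul_le (u v : Perm α) : fl (u * v) ≤ fl u + fl v := by
  obtain ⟨l1, h1, p1, len1⟩ := exists_word u
  obtain ⟨l2, h2, p2, len2⟩ := exists_word v
  have hsl : IsSwapList (l1 ++ l2) := by
    intro t ht
    rcases List.mem_append.mp ht with ht' | ht'
    · exact h1 t ht'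
    · exact h2 t ht'
  have h3 := fl_prod_le (l1 ++ l2) hsl
  rw [List.prod_append, p1, p2, List.length_append, len1, len2] at h3
  exact h3

lemma absLeF_trans {u v w : Perm α} (h1 : absLeF u v) (h2 : absLeF v w) : absLeF u w := by
  unfold absLeF at *
  have hsub : fl (u⁻¹ * w) ≤ fl (u⁻¹ * v) + fl (v⁻¹ * w) := by
    have h := fl_mul_le (u⁻¹ * v) (v⁻¹ * w)
    rwa [mul_assoc, mul_inv_cancel_left] at h
  have hge : fl w ≤ fl u + fl (u⁻¹ * w) := by
    have h := fl_mul_le u (u⁻¹ * w)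
    rwa [mul_inv_cancel_left] at h
  omega

end Words

section Merge

lemma sameCycle_swap_mul_self {w : Perm α} {a b : α} (hab : a ≠ b) (hn : ¬ w.SameCycle a b) :
    (Equiv.swap a b * w).SameCycle a b := by
  classical
  have hex : ∃ r, 0 < r ∧ (w ^ r) a = a :=
    ⟨orderOf w, orderOf_pos w, by rw [pow_orderOf_eq_one]; rfl⟩
  set r := Nat.find hex with hr
  obtain ⟨hrpos, hra⟩ := Nat.find_spec hex
  have hmin : ∀ j, 0 < j → j < r → (w ^ j) a ≠ a :=
    fun j hj1 hj2 hja => Nat.find_min hex hj2 ⟨hj1, hja⟩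
  have hnb : ∀ j : ℕ, (w ^ j) a ≠ b := fun j hj =>
    hn ⟨(j : ℤ), by rw [zpow_natCast]; exact hj⟩
  have key : ∀ k, k < r → ((Equiv.swap a b * w) ^ k) a = (w ^ k) a := by
    intro k
    induction k with
    | zero => simp
    | succ k ih =>
      intro hk
      have h1 : w ((w ^ k) a) = (w ^ (k+1)) a := by rw [pow_succ', mul_apply]
      rw [pow_succ', mul_apply, ih (by omega), mul_apply, h1]
      exact Equiv.swap_apply_of_ne_of_ne (hmin (k+1) (by omega) hk) (hnb (k+1))
  have hfinal : ((Equiv.swap a b * w) ^ r) a = b := by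
    rcases Nat.exists_eq_add_of_lt hrpos with ⟨k, hk⟩
    have hk' : r = k + 1 := by omega
    rw [hk', pow_succ', mul_apply, key k (by omega), mul_apply]
    have h1 : w ((w ^ k) a) = (w ^ (k+1)) a := by rw [pow_succ', mul_apply]
    rw [h1, ← hk', hra, Equiv.swap_apply_left]
  exact ⟨(r : ℤ), by rw [zpow_natCast]; exact hfinal⟩

lemma sameCycle_swap_mul_mono {w : Perm α} {a b x y : α} (hab : a ≠ b) (hn : ¬ w.SameCycle a b)
    (h : w.SameCycle x y) : (Equiv.swap a b * w).SameCycle x y := by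
  have hm3 := sameCycle_swap_mul_self hab hn
  have hstep : ∀ z, (Equiv.swap a b * w).SameCycle z (w z) := by
    intro z
    by_cases hza : w z = a
    · have h1 : (Equiv.swap a b * w) z = b := by rw [mul_apply, hza, Equiv.swap_apply_left]
      have h2 : (Equiv.swap a b * w).SameCycle z b := ⟨1, by simpa using h1⟩
      rw [hza]
      exact h2.trans hm3.symm
    · by_cases hzb : w z = b
      · have h1 : (Equiv.swap a b * w) z = a := by rw [mul_apply, hzb, Equiv.swap_apply_right]
        have h2 : (Equiv.swap a b * w).SameCycle z a := ⟨1, by simpa using h1⟩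
        rw [hzb]
        exact h2.trans hm3
      · have h1 : (Equiv.swap a b * w) z = w z := by
          rw [mul_apply, Equiv.swap_apply_of_ne_of_ne hza hzb]
        exact ⟨1, by simpa using h1⟩
  obtain ⟨i, hi, hieq⟩ := h.exists_pow_eq'
  subst hieq
  clear hi h
  induction i with
  | zero => simpa using Perm.SameCycle.refl _ _
  | succ i ih =>
    have h1 : (w ^ (i+1)) x = w ((w ^ i) x) := by rw [pow_succ', mul_apply]
    rw [h1]
    exact ih.trans (hstep _)

lemma min_word_sameCycle (l : List (Perm α)) (hsw : IsSwapList l)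
    (hlen : fl l.prod = l.length) :
    ∀ a b, a ≠ b → Equiv.swap a b ∈ l → l.prod.SameCycle a b := by
  induction l with
  | nil => intro a b _ hmem; exact absurd hmem (List.not_mem_nil)
  | cons t l ih =>
    intro a b hab hmem
    rw [List.prod_cons]
    obtain ⟨a₀, b₀, h₀, ht⟩ := hsw t List.mem_cons_self
    have hswl : IsSwapList l := fun u hu => hsw u (List.mem_cons_of_mem _ hu)
    have hl1 : fl l.prod ≤ l.length := fl_prod_le l hswl
    have hl2 : fl (t * l.prod) ≤ fl l.prod + 1 := by
      rw [ht]; exact fl_swap_mul_le h₀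
    rw [List.prod_cons] at hlen
    simp only [List.length_cons] at hlen
    have hfl : fl l.prod = l.length := by omega
    have hup : fl (t * l.prod) = fl l.prod + 1 := by omega
    rcases List.mem_cons.mp hmem with heq | hmem'
    · have hn : ¬ l.prod.SameCycle a b := by
        intro hsc
        have hcontra := fl_swap_mul_of_sameCycle hsc hab
        rw [heq] at hcontra
        omega
      have hres := sameCycle_swap_mul_self hab hn
      rwa [heq] at hres
    · have hscl : l.prod.SameCycle a b := ih hswl hfl a b hab hmem'
      have hn : ¬ l.prod.SameCycle a₀ b₀ := by
        intro hsc
        have hcontra := fl_swap_mul_of_sameCycle hsc h₀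
        rw [← ht] at hcontra
        omega
      have hres := sameCycle_swap_mul_mono h₀ hn hscl
      rwa [← ht] at hres

lemma support_list_prod_le (l : List (Perm α)) (S : Finset α)
    (h : ∀ t ∈ l, t.support ⊆ S) : l.prod.support ⊆ S := by
  induction l with
  | nil => simp only [List.prod_nil, support_one]; exact Finset.empty_subset S
  | cons t l ih =>
    rw [List.prod_cons]
    refine le_trans (support_mul_le _ _) ?_
    exact sup_le (h t List.mem_cons_self) (ih (fun u hu => h u (List.mem_cons_of_mem _ hu)))

lemma absLeF_support {v w : Perm α} (h : absLeF v w) :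
    v.support ⊆ w.support ∧ (v⁻¹ * w).support ⊆ w.support := by
  obtain ⟨l1, hs1, hp1, hl1⟩ := exists_word v
  obtain ⟨l2, hs2, hp2, hl2⟩ := exists_word (v⁻¹ * w)
  have hsl : IsSwapList (l1 ++ l2) := by
    intro t ht
    rcases List.mem_append.mp ht with ht' | ht'
    · exact hs1 t ht'
    · exact hs2 t ht'
  have hprod : (l1 ++ l2).prod = w := by
    rw [List.prod_append, hp1, hp2, mul_inv_cancel_left]
  have hlen : fl (l1 ++ l2).prod = (l1 ++ l2).length := by
    rw [hprod, List.length_append, hl1, hl2]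
    exact h
  have hkey : ∀ t ∈ l1 ++ l2, t.support ⊆ w.support := by
    intro t htl
    obtain ⟨a, b, hab, rfl⟩ := hsl t htl
    rw [support_swap hab]
    have hsc : w.SameCycle a b := by
      have h5 := min_word_sameCycle (l1 ++ l2) hsl hlen a b hab htl
      rwa [hprod] at h5
    intro y hy
    simp only [Finset.mem_insert, Finset.mem_singleton] at hy
    rcases hy with rfl | rfl
    · exact sameCycle_mem_support hsc hab
    · exact sameCycle_mem_support hsc.symm hab.symm
  constructor
  · rw [← hp1]
    exact support_list_prod_le l1 _ (fun t ht => hkey t (List.mem_append_left _ ht))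
  · rw [← hp2]
    exact support_list_prod_le l2 _ (fun t ht => hkey t (List.mem_append_right _ ht))

end Merge

section Split

lemma sameCycle_disjoint_mem {c₁ c₂ : Perm α} (h : Perm.Disjoint c₁ c₂) {a b : α}
    (hs : (c₁ * c₂).SameCycle a b) (ha : a ∈ c₁.support) : b ∈ c₁.support := by
  obtain ⟨i, hi⟩ := hs
  have hfix : c₂ a = a := by
    have hds := disjoint_iff_disjoint_support.mp h
    by_contra hc
    exact (Finset.disjoint_left.mp hds ha) (mem_support.mpr hc)
  have hcomm : (c₁ * c₂) ^ i = c₁ ^ i * c₂ ^ i := Commute.mul_zpow h.commute i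
  rw [hcomm, mul_apply, zpow_apply_eq_self_of_apply_eq_self hfix] at hi
  rw [← hi]
  exact zpow_apply_mem_support.mpr ha

lemma prod_filter_comm (l : List (Perm α)) (S₁ S₂ : Finset α) (hS : _root_.Disjoint S₁ S₂)
    (h : ∀ t ∈ l, t.support ⊆ S₁ ∨ t.support ⊆ S₂) :
    l.prod = (l.filter (fun t => decide (t.support ⊆ S₁))).prod *
             (l.filter (fun t => !decide (t.support ⊆ S₁))).prod := by
  induction l with
  | nil => simp
  | cons t l ih =>
    have ih' := ih (fun u hu => h u (List.mem_cons_of_mem _ hu))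
    by_cases hp : t.support ⊆ S₁
    · rw [List.prod_cons, List.filter_cons_of_pos (by simpa using hp),
        List.filter_cons_of_neg (by simpa using hp), List.prod_cons, mul_assoc, ← ih']
    · rw [List.prod_cons, List.filter_cons_of_neg (by simpa using hp),
        List.filter_cons_of_pos (by simpa using hp), List.prod_cons, ih']
      have hts : t.support ⊆ S₂ := (h t List.mem_cons_self).resolve_left hp
      have hcomm : Commute t (l.filter (fun u => decide (u.support ⊆ S₁))).prod := by
        apply Commute.list_prod_right
        intro x hx
        have hxs : x.support ⊆ S₁ := by
          have := List.of_mem_filter hx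
          simpa using this
        refine Perm.Disjoint.commute ?_
        refine disjoint_iff_disjoint_support.mpr ?_
        exact Finset.disjoint_of_subset_left hts (Finset.disjoint_of_subset_right hxs hS.symm)
      rw [← mul_assoc, hcomm.eq, mul_assoc]

lemma disjoint_decomp_unique {S₁ S₂ : Finset α} (hS : _root_.Disjoint S₁ S₂)
    {A B A' B' : Perm α}
    (hA : A.support ⊆ S₁) (hB : B.support ⊆ S₂) (hA' : A'.support ⊆ S₁) (hB' : B'.support ⊆ S₂)
    (h : A * B = A' * B') : A = A' ∧ B = B' := by
  have hAA : A = A' := by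
    ext x
    by_cases hx : x ∈ S₁
    · have hxB : B x = x := by
        refine notMem_support.mp (fun hc => ?_)
        exact (Finset.disjoint_left.mp hS hx) (hB hc)
      have hxB' : B' x = x := by
        refine notMem_support.mp (fun hc => ?_)
        exact (Finset.disjoint_left.mp hS hx) (hB' hc)
      have := congrArg (fun σ : Perm α => σ x) h
      simpa [mul_apply, hxB, hxB'] using this
    · have h1 : A x = x := notMem_support.mp (fun hc => hx (hA hc))
      have h2 : A' x = x := notMem_support.mp (fun hc => hx (hA' hc))
      rw [h1, h2]
  refine ⟨hAA, ?_⟩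
  have := h
  rw [hAA] at this
  exact mul_left_cancel this

lemma absLeF_mul_split {c₁ c₂ u : Perm α} (hd : Perm.Disjoint c₁ c₂)
    (h : absLeF u (c₁ * c₂)) :
    ∃ u₁ u₂ : Perm α, u = u₁ * u₂ ∧ absLeF u₁ c₁ ∧ absLeF u₂ c₂ := by
  have hds := disjoint_iff_disjoint_support.mp hd
  obtain ⟨l1, hs1, hp1, hl1⟩ := exists_word u
  obtain ⟨l2, hs2, hp2, hl2⟩ := exists_word (u⁻¹ * (c₁ * c₂))
  have hsl : IsSwapList (l1 ++ l2) := by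
    intro t ht
    rcases List.mem_append.mp ht with ht' | ht'
    · exact hs1 t ht'
    · exact hs2 t ht'
  have hprod : (l1 ++ l2).prod = c₁ * c₂ := by
    rw [List.prod_append, hp1, hp2, mul_inv_cancel_left]
  have hlen : fl (l1 ++ l2).prod = (l1 ++ l2).length := by
    rw [hprod, List.length_append, hl1, hl2]
    exact h
  -- every swap in the word has support inside supp c₁ or supp c₂
  have hclass : ∀ t ∈ l1 ++ l2, t.support ⊆ c₁.support ∨ t.support ⊆ c₂.support := by
    intro t htl
    obtain ⟨a, b, hab, rfl⟩ := hsl t htl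
    have hsc : (c₁ * c₂).SameCycle a b := by
      have h5 := min_word_sameCycle (l1 ++ l2) hsl hlen a b hab htl
      rwa [hprod] at h5
    have hamem : a ∈ (c₁ * c₂).support := sameCycle_mem_support hsc hab
    rw [hd.support_mul, Finset.mem_union] at hamem
    rcases hamem with ha | ha
    · left
      rw [support_swap hab]
      intro y hy
      simp only [Finset.mem_insert, Finset.mem_singleton] at hy
      rcases hy with rfl | rfl
      · exact ha
      · exact sameCycle_disjoint_mem hd hsc ha
    · right
      rw [support_swap hab]
      have hsc' : (c₂ * c₁).SameCycle a b := by rwa [← hd.commute.eq]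
      intro y hy
      simp only [Finset.mem_insert, Finset.mem_singleton] at hy
      rcases hy with rfl | rfl
      · exact ha
      · exact sameCycle_disjoint_mem hd.symm hsc' ha
  set P : Perm α → Bool := fun t => decide (t.support ⊆ c₁.support) with hP
  set u₁ := (l1.filter P).prod with hu₁
  set u₂ := (l1.filter (fun t => !P t)).prod with hu₂
  set v₁ := (l2.filter P).prod with hv₁
  set v₂ := (l2.filter (fun t => !P t)).prod with hv₂
  have hclass1 : ∀ t ∈ l1, t.support ⊆ c₁.support ∨ t.support ⊆ c₂.support :=
    fun t ht => hclass t (List.mem_append_left _ ht)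
  have hclass2 : ∀ t ∈ l2, t.support ⊆ c₁.support ∨ t.support ⊆ c₂.support :=
    fun t ht => hclass t (List.mem_append_right _ ht)
  have hu12 : u = u₁ * u₂ := by
    have h7 := prod_filter_comm l1 _ _ hds hclass1
    rw [hp1] at h7
    exact h7
  have hv12 : u⁻¹ * (c₁ * c₂) = v₁ * v₂ := by
    have h7 := prod_filter_comm l2 _ _ hds hclass2
    rw [hp2] at h7
    exact h7
  -- support bounds
  have hsupp_filter1 : ∀ (l : List (Perm α)), (∀ t ∈ l, t.support ⊆ c₁.support ∨ t.support ⊆ c₂.support) →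
      ((l.filter P).prod.support ⊆ c₁.support) ∧
      ((l.filter (fun t => !P t)).prod.support ⊆ c₂.support) := by
    intro l hcl
    constructor
    · refine support_list_prod_le _ _ (fun t ht => ?_)
      have := List.of_mem_filter ht
      simpa [hP] using this
    · refine support_list_prod_le _ _ (fun t ht => ?_)
      have h6 := List.of_mem_filter ht
      simp only [hP, Bool.not_eq_true', decide_eq_false_iff_not] at h6
      exact (hcl t (List.mem_of_mem_filter ht)).resolve_left h6
  obtain ⟨hU1, hU2⟩ := hsupp_filter1 l1 hclass1
  obtain ⟨hV1, hV2⟩ := hsupp_filter1 l2 hclass2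
  -- c₁ = u₁ v₁, c₂ = u₂ v₂
  have hcomm12 : Commute u₂ v₁ := by
    refine Perm.Disjoint.commute (disjoint_iff_disjoint_support.mpr ?_)
    exact Finset.disjoint_of_subset_left hU2 (Finset.disjoint_of_subset_right hV1 hds.symm)
  have hcc : c₁ * c₂ = (u₁ * v₁) * (u₂ * v₂) := by
    have : c₁ * c₂ = u * (u⁻¹ * (c₁ * c₂)) := by rw [mul_inv_cancel_left]
    rw [this, hv12, hu12]
    rw [mul_assoc u₁ u₂, ← mul_assoc u₂, hcomm12.eq, mul_assoc v₁, ← mul_assoc u₁]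
  have hsuv1 : (u₁ * v₁).support ⊆ c₁.support :=
    le_trans (support_mul_le _ _) (sup_le hU1 hV1)
  have hsuv2 : (u₂ * v₂).support ⊆ c₂.support :=
    le_trans (support_mul_le _ _) (sup_le hU2 hV2)
  obtain ⟨hc1, hc2⟩ := disjoint_decomp_unique hds (le_refl _) (le_refl _) hsuv1 hsuv2 hcc
  -- length bookkeeping
  have hswf : ∀ (l : List (Perm α)) (f : Perm α → Bool), IsSwapList l → IsSwapList (l.filter f) :=
    fun l f hl t ht => hl t (List.mem_of_mem_filter ht)
  have hflu1 : fl u₁ ≤ (l1.filter P).length := fl_prod_le _ (hswf l1 P hs1)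
  have hflu2 : fl u₂ ≤ (l1.filter (fun t => !P t)).length := fl_prod_le _ (hswf l1 _ hs1)
  have hflv1 : fl v₁ ≤ (l2.filter P).length := fl_prod_le _ (hswf l2 P hs2)
  have hflv2 : fl v₂ ≤ (l2.filter (fun t => !P t)).length := fl_prod_le _ (hswf l2 _ hs2)
  have hsplit1 : l1.length = (l1.filter P).length + (l1.filter (fun t => !P t)).length :=
    List.length_eq_length_filter_add P
  have hsplit2 : l2.length = (l2.filter P).length + (l2.filter (fun t => !P t)).length :=
    List.length_eq_length_filter_add P
  have hfc : fl (c₁ * c₂) = fl c₁ + fl c₂ := fl_mul_disjoint hd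
  have hb1 : fl c₁ ≤ fl u₁ + fl v₁ := by rw [hc1]; exact fl_mul_le _ _
  have hb2 : fl c₂ ≤ fl u₂ + fl v₂ := by rw [hc2]; exact fl_mul_le _ _
  have htotal : fl (c₁ * c₂) = fl u + fl (u⁻¹ * (c₁ * c₂)) := h
  refine ⟨u₁, u₂, hu12, ?_, ?_⟩
  · show fl c₁ = fl u₁ + fl (u₁⁻¹ * c₁)
    have : u₁⁻¹ * c₁ = v₁ := by rw [hc1, inv_mul_cancel_left]
    rw [this]
    omega
  · show fl c₂ = fl u₂ + fl (u₂⁻¹ * c₂)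
    have : u₂⁻¹ * c₂ = v₂ := by rw [hc2, inv_mul_cancel_left]
    rw [this]
    omega

lemma card_fiber_mul {c₁ c₂ : Perm α} (hd : Perm.Disjoint c₁ c₂) (x₀ : α)
    (hx : x₀ ∉ c₂.support) :
    Nat.card {u : Perm α // absLeF u (c₁ * c₂) ∧ u x₀ = x₀}
      = Nat.card {u₁ : Perm α // absLeF u₁ c₁ ∧ u₁ x₀ = x₀} *
        Nat.card {u₂ : Perm α // absLeF u₂ c₂} := by
  have hds := disjoint_iff_disjoint_support.mp hd
  rw [← Nat.card_prod]
  refine (Nat.card_congr (Equiv.ofBijective ?_ ⟨?_, ?_⟩)).symm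
  · -- the map
    refine fun p => ⟨p.1.1 * p.2.1, ?_, ?_⟩
    · obtain ⟨⟨u₁, h₁, hfix₁⟩, ⟨u₂, h₂⟩⟩ := p
      obtain ⟨hU1, hV1⟩ := absLeF_support h₁
      obtain ⟨hU2, hV2⟩ := absLeF_support h₂
      have hdu : Perm.Disjoint u₁ u₂ := disjoint_iff_disjoint_support.mpr
        (Finset.disjoint_of_subset_left hU1 (Finset.disjoint_of_subset_right hU2 hds))
      have hcomm : Commute u₂⁻¹ (u₁⁻¹ * c₁) := by
        refine Perm.Disjoint.commute (disjoint_iff_disjoint_support.mpr ?_)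
        have : (u₁⁻¹ * c₁).support ⊆ c₁.support := hV1
        rw [support_inv]
        exact Finset.disjoint_of_subset_left hU2
          (Finset.disjoint_of_subset_right this hds.symm)
      have hinv : (u₁ * u₂)⁻¹ * (c₁ * c₂) = (u₁⁻¹ * c₁) * (u₂⁻¹ * c₂) := by
        rw [mul_inv_rev, mul_assoc, ← mul_assoc u₁⁻¹ c₁ c₂, ← mul_assoc, hcomm.eq, mul_assoc]
      have hdv : Perm.Disjoint (u₁⁻¹ * c₁) (u₂⁻¹ * c₂) := by
        refine disjoint_iff_disjoint_support.mpr ?_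
        exact Finset.disjoint_of_subset_left hV1 (Finset.disjoint_of_subset_right hV2 hds)
      show fl (c₁ * c₂) = fl (u₁ * u₂) + fl ((u₁ * u₂)⁻¹ * (c₁ * c₂))
      rw [hinv, fl_mul_disjoint hd, fl_mul_disjoint hdu, fl_mul_disjoint hdv]
      rw [h₁, h₂]
      ring
    · obtain ⟨⟨u₁, h₁, hfix₁⟩, ⟨u₂, h₂⟩⟩ := p
      obtain ⟨hU2, _⟩ := absLeF_support h₂
      have hfix₂ : u₂ x₀ = x₀ := notMem_support.mp (fun hc => hx (hU2 hc))
      show (u₁ * u₂) x₀ = x₀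
      rw [mul_apply, hfix₂, hfix₁]
  · -- injective
    rintro ⟨⟨u₁, h₁, hfix₁⟩, ⟨u₂, h₂⟩⟩ ⟨⟨u₁', h₁', hfix₁'⟩, ⟨u₂', h₂'⟩⟩ heq
    simp only [Subtype.mk.injEq] at heq
    obtain ⟨hU1, _⟩ := absLeF_support h₁
    obtain ⟨hU2, _⟩ := absLeF_support h₂
    obtain ⟨hU1', _⟩ := absLeF_support h₁'
    obtain ⟨hU2', _⟩ := absLeF_support h₂'
    obtain ⟨e1, e2⟩ := disjoint_decomp_unique hds hU1 hU2 hU1' hU2' heq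
    simp only [Prod.mk.injEq, Subtype.mk.injEq]
    exact ⟨e1, e2⟩
  · -- surjective
    rintro ⟨u, hu, hfix⟩
    obtain ⟨u₁, u₂, rfl, h₁, h₂⟩ := absLeF_mul_split hd hu
    obtain ⟨hU2, _⟩ := absLeF_support h₂
    have hfix₂ : u₂ x₀ = x₀ := notMem_support.mp (fun hc => hx (hU2 hc))
    have hfix₁ : u₁ x₀ = x₀ := by
      have : (u₁ * u₂) x₀ = u₁ x₀ := by rw [mul_apply, hfix₂]
      rw [← this, hfix]
    exact ⟨⟨⟨u₁, h₁, hfix₁⟩, ⟨u₂, h₂⟩⟩, rfl⟩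

end Split

section Deletion

lemma conj_swap (σ : Perm α) (a b : α) : σ⁻¹ * Equiv.swap a b * σ = Equiv.swap (σ⁻¹ a) (σ⁻¹ b) := by
  have := Equiv.swap_apply_apply σ⁻¹ a b
  rw [this]
  simp [mul_assoc]

lemma absLeF_del {c : Perm α} {x₀ : α} (hx : x₀ ∈ c.support) {w : Perm α} :
    (absLeF w c ∧ w x₀ = x₀) ↔ absLeF w (Equiv.swap x₀ (c x₀) * c) := by
  set c' := Equiv.swap x₀ (c x₀) * c with hc'
  have hflc' : fl c' + 1 = fl c := fl_swap_mul_self_apply hx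
  have hcinv : c'⁻¹ * c = Equiv.swap (c⁻¹ x₀) x₀ := by
    rw [hc', mul_inv_rev, Equiv.swap_inv, conj_swap]
    congr 1
    exact Equiv.symm_apply_apply c x₀
  have hcx : c⁻¹ x₀ ≠ x₀ := by
    intro hcontra
    have : c x₀ = x₀ := by
      nth_rewrite 1 [← hcontra]; exact Equiv.apply_symm_apply c x₀
    exact mem_support.mp hx this
  have hc'le : absLeF c' c := by
    show fl c = fl c' + fl (c'⁻¹ * c)
    rw [hcinv, fl_swap hcx]
    omega
  have hxc' : x₀ ∉ c'.support := by
    simp only [hc', mem_support, mul_apply, not_not]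
    -- c' x₀ : swap x₀ (c x₀) (c x₀) = x₀
    exact Equiv.swap_apply_right x₀ (c x₀)
  constructor
  · rintro ⟨hw, hfix⟩
    set v := w⁻¹ * c with hv
    have hvx : v x₀ ≠ x₀ := by
      intro hcontra
      have h1 : w⁻¹ (c x₀) = x₀ := hcontra
      have h2 : c x₀ = w x₀ := by
        have h3 := congrArg w h1
        rwa [Perm.inv_def, Equiv.apply_symm_apply] at h3
      rw [hfix] at h2
      exact mem_support.mp hx h2
    have hkey : w⁻¹ * c' = Equiv.swap x₀ (v x₀) * v := by
      rw [hc', ← mul_assoc]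
      have : w⁻¹ * Equiv.swap x₀ (c x₀) = Equiv.swap x₀ (w⁻¹ (c x₀)) * w⁻¹ := by
        have h3 := conj_swap w x₀ (c x₀)
        have hw0 : w⁻¹ x₀ = x₀ := by
          nth_rewrite 1 [← hfix]
          exact Equiv.symm_apply_apply w x₀
        rw [hw0] at h3
        calc w⁻¹ * Equiv.swap x₀ (c x₀) = (w⁻¹ * Equiv.swap x₀ (c x₀) * w) * w⁻¹ := by
              rw [mul_assoc, mul_assoc, mul_inv_cancel, mul_one]
            _ = Equiv.swap x₀ (w⁻¹ (c x₀)) * w⁻¹ := by rw [h3]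
      rw [this, mul_assoc]
      rfl
    have hdel : fl (w⁻¹ * c') + 1 = fl v := by
      have := fl_swap_mul_self_apply (w := v) (x := x₀) (mem_support.mpr hvx)
      rwa [← hkey] at this
    have hwv : fl c = fl w + fl v := hw
    show fl c' = fl w + fl (w⁻¹ * c')
    omega
  · intro hw'
    have hw : absLeF w c := absLeF_trans hw' hc'le
    obtain ⟨hsupp, _⟩ := absLeF_support hw'
    have hfix : w x₀ = x₀ := notMem_support.mp (fun hc2 => hxc' (hsupp hc2))
    exact ⟨hw, hfix⟩

lemma cycle_or_one_of_card {w : Perm α} (h : w.support.card ≤ fl w + 1) :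
    IsCycle w ∨ w = 1 := by
  have hk := key w
  have hcard : Multiset.card w.cycleType ≤ 1 := by omega
  interval_cases hc : (Multiset.card w.cycleType)
  · right; exact card_cycleType_eq_zero.mp hc
  · left; exact card_cycleType_eq_one.mp hc

lemma cycle_pow_apply_ne {c : Perm α} (hc : IsCycle c) {x₀ : α} (hx : x₀ ∈ c.support)
    {r : ℕ} (hr : 0 < r) (hrm : r < c.support.card) : (c ^ r) x₀ ≠ x₀ := by
  intro h
  have hord : orderOf c = c.support.card := hc.orderOf
  have hall : c ^ r = 1 := by
    ext y
    by_cases hy : y ∈ c.support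
    · have hsc : c.SameCycle x₀ y := hc.sameCycle (mem_support.mp hx) (mem_support.mp hy)
      obtain ⟨i, _, rfl⟩ := hsc.exists_pow_eq'
      have hcomm : (c ^ r) ((c ^ i) x₀) = (c ^ i) ((c ^ r) x₀) := by
        rw [← mul_apply, ← mul_apply, ← pow_add, ← pow_add, add_comm]
      rw [hcomm, h, Perm.one_apply]
    · have hfy : c y = y := notMem_support.mp hy
      rw [pow_apply_eq_self_of_apply_eq_self hfy, Perm.one_apply]
  have := orderOf_le_of_pow_eq_one hr hall
  omega

end Deletion

section Master

lemma nat_card_sigma {ι : Type*} [Fintype ι] (f : ι → Type*) [∀ i, Fintype (f i)] :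
    Nat.card (Σ i, f i) = ∑ i, Nat.card (f i) := by
  simp only [Nat.card_eq_fintype_card]
  exact Fintype.card_sigma

lemma fiber_transfer {c : Perm α} {x₀ y : α} (hy : y ≠ x₀)
    (hd : fl (Equiv.swap x₀ y * c) + 1 = fl c) :
    Nat.card {w : Perm α // absLeF w c ∧ w x₀ = y}
      = Nat.card {u : Perm α // absLeF u (Equiv.swap x₀ y * c) ∧ u x₀ = x₀} := by
  apply Nat.card_congr
  have hswapinv : ∀ σ : Perm α, Equiv.swap x₀ y * (Equiv.swap x₀ y * σ) = σ := by
    intro σ; rw [← mul_assoc, Equiv.swap_mul_self, one_mul]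
  have hto : ∀ w : Perm α, absLeF w c → w x₀ = y →
      absLeF (Equiv.swap x₀ y * w) (Equiv.swap x₀ y * c) ∧ (Equiv.swap x₀ y * w) x₀ = x₀ := by
    intro w hw hfix
    have hxs : x₀ ∈ w.support := by
      rw [mem_support, hfix]; exact hy
    have hu1 : fl (Equiv.swap x₀ y * w) + 1 = fl w := by
      have := fl_swap_mul_self_apply hxs
      rwa [hfix] at this
    have hinv : (Equiv.swap x₀ y * w)⁻¹ * (Equiv.swap x₀ y * c) = w⁻¹ * c := by
      rw [mul_inv_rev, mul_assoc, ← mul_assoc (Equiv.swap x₀ y)⁻¹, Equiv.swap_inv,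
        Equiv.swap_mul_self, one_mul]
    constructor
    · show fl (Equiv.swap x₀ y * c) = fl (Equiv.swap x₀ y * w) +
        fl ((Equiv.swap x₀ y * w)⁻¹ * (Equiv.swap x₀ y * c))
      rw [hinv]
      have hww : fl c = fl w + fl (w⁻¹ * c) := hw
      omega
    · rw [mul_apply, hfix, Equiv.swap_apply_right]
  have hfrom : ∀ u : Perm α, absLeF u (Equiv.swap x₀ y * c) → u x₀ = x₀ →
      absLeF (Equiv.swap x₀ y * u) c ∧ (Equiv.swap x₀ y * u) x₀ = y := by
    intro u hu hfix
    have hxy : x₀ ≠ y := Ne.symm hy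
    have h1 : fl (Equiv.swap x₀ y * u) ≤ fl u + 1 := fl_swap_mul_le hxy
    have hinv : (Equiv.swap x₀ y * u)⁻¹ * c = u⁻¹ * (Equiv.swap x₀ y * c) := by
      rw [mul_inv_rev, mul_assoc, Equiv.swap_inv]
    have h2 : fl c ≤ fl (Equiv.swap x₀ y * u) + fl ((Equiv.swap x₀ y * u)⁻¹ * c) := by
      have h3 := fl_mul_le (Equiv.swap x₀ y * u) ((Equiv.swap x₀ y * u)⁻¹ * c)
      rwa [mul_inv_cancel_left] at h3
    have hud : fl (Equiv.swap x₀ y * c) = fl u + fl (u⁻¹ * (Equiv.swap x₀ y * c)) := hu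
    constructor
    · show fl c = fl (Equiv.swap x₀ y * u) + fl ((Equiv.swap x₀ y * u)⁻¹ * c)
      rw [hinv] at h2 ⊢
      omega
    · rw [mul_apply, hfix, Equiv.swap_apply_left]
  refine ⟨fun p => ⟨Equiv.swap x₀ y * p.1, hto p.1 p.2.1 p.2.2⟩,
          fun q => ⟨Equiv.swap x₀ y * q.1, hfrom q.1 q.2.1 q.2.2⟩, ?_, ?_⟩
  · rintro ⟨w, hw⟩; exact Subtype.ext (hswapinv w)
  · rintro ⟨u, hu⟩; exact Subtype.ext (hswapinv u)

lemma count_one (x₀ : α) :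
    Nat.card {w : Perm α // absLeF w (1 : Perm α) ∧ w x₀ = x₀} = 1 := by
  have hiff : ∀ w : Perm α, (absLeF w 1 ∧ w x₀ = x₀) ↔ w = 1 := by
    intro w
    constructor
    · rintro ⟨h, -⟩
      have h1 : fl (1 : Perm α) = fl w + fl (w⁻¹ * 1) := h
      rw [fl_one] at h1
      exact fl_eq_zero_iff.mp (by omega)
    · rintro rfl
      refine ⟨?_, rfl⟩
      show fl (1 : Perm α) = fl 1 + fl (1⁻¹ * 1)
      simp
  have he : {w : Perm α // absLeF w (1 : Perm α) ∧ w x₀ = x₀} ≃ Unit := by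
    refine ⟨fun _ => Unit.unit, fun _ => ⟨1, (hiff 1).mpr rfl⟩, ?_, ?_⟩
    · rintro ⟨w, hw⟩
      exact Subtype.ext (((hiff w).mp hw).symm)
    · intro u; rfl
  rw [Nat.card_congr he]
  simp

lemma count_one' :
    Nat.card {w : Perm α // absLeF w (1 : Perm α)} = 1 := by
  have hiff : ∀ w : Perm α, absLeF w 1 ↔ w = 1 := by
    intro w
    constructor
    · intro h
      have h1 : fl (1 : Perm α) = fl w + fl (w⁻¹ * 1) := h
      rw [fl_one] at h1
      exact fl_eq_zero_iff.mp (by omega)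
    · rintro rfl
      show fl (1 : Perm α) = fl 1 + fl (1⁻¹ * 1)
      simp
  have he : {w : Perm α // absLeF w (1 : Perm α)} ≃ Unit := by
    refine ⟨fun _ => Unit.unit, fun _ => ⟨1, (hiff 1).mpr rfl⟩, ?_, ?_⟩
    · rintro ⟨w, hw⟩
      exact Subtype.ext (((hiff w).mp hw).symm)
    · intro u; rfl
  rw [Nat.card_congr he]
  simp

lemma count_fix {s : ℕ}
    (IH : ∀ m, m < s → ∀ c : Perm α, (IsCycle c ∨ c = 1) → fl c = m →
      Nat.card {w : Perm α // absLeF w c} = catalan (m + 1))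
    {c₁ : Perm α} (hc₁ : IsCycle c₁ ∨ c₁ = 1) (hfl : fl c₁ ≤ s)
    (x₀ : α) (hfl2 : x₀ ∉ c₁.support → fl c₁ < s) :
    Nat.card {w : Perm α // absLeF w c₁ ∧ w x₀ = x₀}
      = if x₀ ∈ c₁.support then catalan (fl c₁) else catalan (fl c₁ + 1) := by
  by_cases hx : x₀ ∈ c₁.support
  · rw [if_pos hx]
    have hcy : IsCycle c₁ := by
      rcases hc₁ with h | rfl
      · exact h
      · simp at hx
    set c' := Equiv.swap x₀ (c₁ x₀) * c₁ with hc'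
    have hflc' : fl c' + 1 = fl c₁ := fl_swap_mul_self_apply hx
    have hxc' : c' x₀ = x₀ := by
      rw [hc', mul_apply]
      exact Equiv.swap_apply_right x₀ (c₁ x₀)
    have hsupp' : c'.support ⊆ c₁.support.erase x₀ := by
      intro z hz
      rw [Finset.mem_erase]
      constructor
      · intro hcontra; subst hcontra; exact (mem_support.mp hz) hxc'
      · have h1 : c'.support ⊆ c₁.support := by
          rw [hc']
          refine le_trans (support_mul_le _ _) (sup_le ?_ (le_refl _))
          rw [support_swap (Ne.symm (mem_support.mp hx))]
          intro z hz
          simp only [Finset.mem_insert, Finset.mem_singleton] at hz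
          rcases hz with rfl | rfl
          · exact hx
          · exact apply_mem_support.mpr hx
        exact h1 hz
    have hcard' : c'.support.card ≤ fl c' + 1 := by
      have h1 := Finset.card_le_card hsupp'
      have h2 : (c₁.support.erase x₀).card = c₁.support.card - 1 :=
        Finset.card_erase_of_mem hx
      have h3 := fl_isCycle hcy
      omega
    have hcyc' : IsCycle c' ∨ c' = 1 := cycle_or_one_of_card hcard'
    have hfl' : fl c' < s := by omega
    have he : {w : Perm α // absLeF w c₁ ∧ w x₀ = x₀} ≃ {w : Perm α // absLeF w c'} :=
      Equiv.subtypeEquivRight (fun w => absLeF_del hx)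
    rw [Nat.card_congr he, IH (fl c') hfl' c' hcyc' rfl, hflc']
  · rw [if_neg hx]
    have he : {w : Perm α // absLeF w c₁ ∧ w x₀ = x₀} ≃ {w : Perm α // absLeF w c₁} := by
      refine Equiv.subtypeEquivRight (fun w => ?_)
      constructor
      · exact fun h => h.1
      · intro h
        refine ⟨h, ?_⟩
        have hsupp := (absLeF_support h).1
        exact notMem_support.mp (fun hc => hx (hsupp hc))
    rw [Nat.card_congr he]
    exact IH (fl c₁) (hfl2 hx) c₁ hc₁ rfl

end Master

theorem master (s : ℕ) : ∀ c : Perm α, (IsCycle c ∨ c = 1) → fl c = s →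
    Nat.card {w : Perm α // absLeF w c} = catalan (s + 1) := by
  induction s using Nat.strong_induction_on with
  | _ s IH =>
  intro c hc hfl
  rcases Nat.eq_zero_or_pos s with rfl | hs
  · have hc1 : c = 1 := by
      rcases hc with hcy | rfl
      · exfalso
        have h2 := fl_isCycle hcy
        have h3 := hcy.two_le_card_support
        omega
      · rfl
    subst hc1
    rw [count_one', catalan_one]
  · have hcy : IsCycle c := by
      rcases hc with h | rfl
      · exact h
      · rw [fl_one] at hfl; omega
    obtain ⟨x₀, hx₀, -⟩ := id hcy
    have hx₀s : x₀ ∈ c.support := mem_support.mpr hx₀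
    have hm : c.support.card = s + 1 := by
      have := fl_isCycle hcy; omega
    classical
    set e : Fin (s+1) → α := fun k => (c ^ (k : ℕ)) x₀ with he
    have haux : ∀ i j : Fin (s+1), (i : ℕ) ≤ (j : ℕ) → e i = e j → i = j := by
      intro i j hij2 hij
      have h1 : (c ^ (i : ℕ)) ((c ^ ((j : ℕ) - (i : ℕ))) x₀) = (c ^ (i : ℕ)) x₀ := by
        rw [← mul_apply, ← pow_add]
        have h0 : (i : ℕ) + ((j : ℕ) - (i : ℕ)) = (j : ℕ) := by omega
        rw [h0]
        exact hij.symm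
      have h2 := (Equiv.injective (c ^ (i : ℕ))) h1
      by_contra hne
      have hlt : 0 < (j : ℕ) - (i : ℕ) := by
        have hne2 : (i : ℕ) ≠ (j : ℕ) := fun hh => hne (Fin.ext hh)
        omega
      have hjlt := j.isLt
      exact cycle_pow_apply_ne hcy hx₀s hlt (by omega) h2
    have hinj : Function.Injective e := by
      intro i j hij
      rcases le_total (i : ℕ) (j : ℕ) with h | h
      · exact haux i j h hij
      · exact (haux j i h hij.symm).symm
    have hemem : ∀ k : Fin (s+1), e k ∈ c.support := fun k => pow_apply_mem_support.mpr hx₀s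
    have hbij : Function.Bijective
        (fun k : Fin (s+1) => (⟨e k, hemem k⟩ : {y // y ∈ c.support})) := by
      rw [Fintype.bijective_iff_injective_and_card]
      constructor
      · intro i j hij
        exact hinj (congrArg Subtype.val hij)
      · rw [Fintype.card_coe, hm, Fintype.card_fin]
    set E := Equiv.ofBijective _ hbij with hE
    have hwmem : ∀ w : Perm α, absLeF w c → w x₀ ∈ c.support := by
      intro w hw
      by_cases hfx : w x₀ = x₀
      · rw [hfx]; exact hx₀s
      · have h1 : x₀ ∈ w.support := mem_support.mpr hfx
        exact (absLeF_support hw).1 (apply_mem_support.mpr h1)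
    set F : {w : Perm α // absLeF w c} → Fin (s+1) :=
      fun w => E.symm ⟨w.1 x₀, hwmem w.1 w.2⟩ with hF
    have hFiff : ∀ (w : {w : Perm α // absLeF w c}) (k : Fin (s+1)),
        F w = k ↔ w.1 x₀ = e k := by
      intro w k
      rw [hF, Equiv.symm_apply_eq]
      constructor
      · intro h1
        exact congrArg Subtype.val h1
      · intro h1
        exact Subtype.ext h1
    have hsum : Nat.card {w : Perm α // absLeF w c}
        = ∑ k : Fin (s+1), Nat.card {w : Perm α // absLeF w c ∧ w x₀ = e k} := by
      have h1 : Nat.card {w : Perm α // absLeF w c}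
          = Nat.card (Σ k : Fin (s+1), {a : {w : Perm α // absLeF w c} // F a = k}) :=
        (Nat.card_congr (Equiv.sigmaFiberEquiv F)).symm
      rw [h1, nat_card_sigma]
      refine Finset.sum_congr rfl (fun k _ => ?_)
      apply Nat.card_congr
      refine ⟨fun a => ⟨a.1.1, a.1.2, (hFiff a.1 k).mp a.2⟩,
              fun w => ⟨⟨w.1, w.2.1⟩, (hFiff ⟨w.1, w.2.1⟩ k).mpr w.2.2⟩, ?_, ?_⟩
      · rintro ⟨⟨w, hw⟩, hk⟩; rfl
      · rintro ⟨w, hw, hk⟩; rfl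
    have he0 : e 0 = x₀ := by
      show (c ^ ((0 : Fin (s+1)) : ℕ)) x₀ = x₀
      simp
    have hfib0 : Nat.card {w : Perm α // absLeF w c ∧ w x₀ = e 0} = catalan s := by
      have hiff0 : ∀ w : Perm α, (absLeF w c ∧ w x₀ = e 0) ↔ (absLeF w c ∧ w x₀ = x₀) := by
        intro w; rw [he0]
      rw [Nat.card_congr (Equiv.subtypeEquivRight hiff0)]
      rw [count_fix IH hc (le_of_eq hfl) x₀ (fun hx => absurd hx₀s hx), if_pos hx₀s, hfl]
    have hfibk : ∀ k : Fin (s+1), 1 ≤ (k : ℕ) →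
        Nat.card {w : Perm α // absLeF w c ∧ w x₀ = e k}
          = catalan ((k : ℕ) - 1) * catalan (s + 1 - (k : ℕ)) := by
      intro k hk1
      set kv := (k : ℕ) with hkv
      have hkvs : kv ≤ s := by have := k.isLt; omega
      have hy0 : e k ≠ x₀ := by
        rw [← he0]
        intro hcontra
        have h1 := congrArg Fin.val (hinj hcontra)
        simp only [Fin.val_zero] at h1
        omega
      set y := e k with hydef
      set t := Equiv.swap x₀ y with ht
      set d := t * c with hd
      have hsc : c.SameCycle x₀ y := ⟨(kv : ℤ), by rw [zpow_natCast]⟩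
      have hxy : x₀ ≠ y := Ne.symm hy0
      have hdle : fl d ≤ fl c := fl_swap_mul_of_sameCycle hsc hxy
      have hdelta : fl d + 1 = fl c := by
        have hcases := fl_swap_mul_cases (w := c) hxy
        rw [← ht, ← hd] at hcases
        rcases hcases with h | h
        · omega
        · exact h
      have hdelta' : fl (Equiv.swap x₀ y * c) + 1 = fl c := by
        rw [← ht, ← hd]; exact hdelta
      rw [fiber_transfer hy0 hdelta']
      set c₁ := d.cycleOf x₀ with hc₁
      set c₂ := c₁⁻¹ * d with hc₂
      have hdc : d = c₁ * c₂ := cycleOf_decomp d x₀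
      have hdisj : Perm.Disjoint c₁ c₂ := cycleOf_decomp_disjoint d x₀
      have hx₀c₂ : c₂ x₀ = x₀ := by
        rw [hc₂, cycleOf_compl_apply, if_pos (Perm.SameCycle.refl _ _)]
      have hx₀c₂s : x₀ ∉ c₂.support := notMem_support.mpr hx₀c₂
      have hA : ∀ j : ℕ, j < kv → (d ^ j) x₀ = (c ^ j) x₀ := by
        intro j
        induction j with
        | zero => intro _; simp
        | succ j ihj =>
          intro hj
          have h1 : (d ^ (j+1)) x₀ = d ((d ^ j) x₀) := by rw [pow_succ', mul_apply]
          rw [h1, ihj (by omega), hd, mul_apply]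
          have h2 : c ((c ^ j) x₀) = (c ^ (j+1)) x₀ := by rw [pow_succ', mul_apply]
          rw [h2]
          have hne1 : (c ^ (j+1)) x₀ ≠ x₀ :=
            cycle_pow_apply_ne hcy hx₀s (by omega) (by omega)
          have hne2 : (c ^ (j+1)) x₀ ≠ e k := by
            intro hcontra
            have h3 : e ⟨j+1, by omega⟩ = e k := hcontra
            have h4 := congrArg Fin.val (hinj h3)
            simp only at h4
            omega
          rw [ht]
          exact Equiv.swap_apply_of_ne_of_ne hne1 hne2
      have hB : (d ^ kv) x₀ = x₀ := by
        have h0 : kv - 1 + 1 = kv := by omega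
        have h1 : (d ^ kv) x₀ = d ((d ^ (kv - 1)) x₀) := by
          conv_lhs => rw [← h0]
          rw [pow_succ', mul_apply]
        rw [h1, hA (kv - 1) (by omega), hd, mul_apply]
        have h2 : c ((c ^ (kv - 1)) x₀) = (c ^ kv) x₀ := by
          conv_rhs => rw [← h0]
          rw [pow_succ', mul_apply]
        rw [h2]
        have h3 : (c ^ kv) x₀ = e k := rfl
        rw [h3, ht]
        exact Equiv.swap_apply_right x₀ (e k)
      have hkvpos : 0 < kv := hk1
      have hC : ∀ i : ℕ, (d ^ i) x₀ = (c ^ (i % kv)) x₀ := by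
        intro i
        induction i using Nat.strong_induction_on with
        | _ i ihi =>
        by_cases hi : i < kv
        · rw [Nat.mod_eq_of_lt hi]; exact hA i hi
        · push_neg at hi
          have h1 : d ^ i = d ^ (i - kv) * d ^ kv := by
            rw [← pow_add]
            congr 1
            omega
          rw [h1, mul_apply, hB, ihi (i - kv) (by omega)]
          have h2 : (i - kv) % kv = i % kv := by
            conv_rhs => rw [← Nat.sub_add_cancel hi]
            rw [Nat.add_mod_right]
          rw [h2]
      have hSC : ∀ z, d.SameCycle x₀ z ↔ ∃ j, j < kv ∧ z = (c ^ j) x₀ := by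
        intro z
        constructor
        · intro hsc2
          obtain ⟨i, _, rfl⟩ := hsc2.exists_pow_eq'
          exact ⟨i % kv, Nat.mod_lt i hkvpos, hC i⟩
        · rintro ⟨j, hj, rfl⟩
          exact ⟨(j : ℤ), by rw [zpow_natCast]; exact hA j hj⟩
      have hiff2 : ∀ u : Perm α, (absLeF u (Equiv.swap x₀ y * c) ∧ u x₀ = x₀) ↔
          (absLeF u (c₁ * c₂) ∧ u x₀ = x₀) := by
        intro u; rw [← ht, ← hd, ← hdc]
      rw [Nat.card_congr (Equiv.subtypeEquivRight hiff2), card_fiber_mul hdisj x₀ hx₀c₂s]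
      have hsd : d.support ⊆ c.support := by
        rw [hd]
        refine le_trans (support_mul_le _ _) (sup_le ?_ (le_refl _))
        rw [ht, support_swap hxy]
        intro z hz
        simp only [Finset.mem_insert, Finset.mem_singleton] at hz
        rcases hz with rfl | rfl
        · exact hx₀s
        · exact hemem k
      by_cases hkv1 : kv = 1
      · have hdx : d x₀ = x₀ := by
          have h1 := hB
          rw [hkv1, pow_one] at h1
          exact h1
        have hc₁1 : c₁ = 1 := (cycleOf_eq_one_iff d).mpr hdx
        have hx₀d : x₀ ∉ d.support := notMem_support.mpr hdx
        have hc₂d : c₂ = d := by rw [hc₂, hc₁1]; simp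
        have hsd2 : d.support ⊆ c.support.erase x₀ := by
          intro z hz
          rw [Finset.mem_erase]
          refine ⟨fun hcontra => ?_, hsd hz⟩
          subst hcontra
          exact hx₀d hz
        have hcardd : d.support.card ≤ s := by
          have h1 := Finset.card_le_card hsd2
          have h2 : (c.support.erase x₀).card = c.support.card - 1 :=
            Finset.card_erase_of_mem hx₀s
          omega
        have hcyc2 : IsCycle d ∨ d = 1 := cycle_or_one_of_card (by omega)
        have hfld2 : fl d = s - 1 := by omega
        rw [hc₁1, hc₂d, count_one x₀, IH (s-1) (by omega) d hcyc2 hfld2, hkv1]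
        have h5 : s - 1 + 1 = s + 1 - 1 := by omega
        rw [h5]
        simp
      · have hkv2 : 2 ≤ kv := by omega
        have hdx : d x₀ = c x₀ := by
          have h1 := hA 1 (by omega)
          rw [pow_one, pow_one] at h1
          exact h1
        have hx₀d : x₀ ∈ d.support := by
          rw [mem_support, hdx]
          exact hx₀
        have hc₁cyc : IsCycle c₁ := isCycle_cycleOf d (mem_support.mp hx₀d)
        have hsupp₁ : c₁.support = (Finset.range kv).image (fun j => (c ^ j) x₀) := by
          ext z
          rw [hc₁, mem_support_cycleOf_iff]
          constructor
          · rintro ⟨hsc2, -⟩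
            obtain ⟨j, hj, rfl⟩ := (hSC z).mp hsc2
            exact Finset.mem_image.mpr ⟨j, Finset.mem_range.mpr hj, rfl⟩
          · intro hz
            obtain ⟨j, hj, rfl⟩ := Finset.mem_image.mp hz
            exact ⟨(hSC _).mpr ⟨j, Finset.mem_range.mp hj, rfl⟩, hx₀d⟩
        have hcard₁ : c₁.support.card = kv := by
          rw [hsupp₁, Finset.card_image_of_injOn, Finset.card_range]
          intro i hi j hj hij
          simp only [Finset.coe_range, Set.mem_Iio] at hi hj
          have h1 : e ⟨i, by omega⟩ = e ⟨j, by omega⟩ := hij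
          have h2 := congrArg Fin.val (hinj h1)
          simpa using h2
        have hflc₁ : fl c₁ + 1 = kv := by
          have := fl_isCycle hc₁cyc
          omega
        have hflds : fl d = fl c₁ + fl c₂ := by
          have h := fl_mul_disjoint hdisj
          rw [← hdc] at h
          exact h
        have hflc₂ : fl c₂ = s - kv := by omega
        have hsuppu : d.support = c₁.support ∪ c₂.support := by
          conv_lhs => rw [hdc]
          exact hdisj.support_mul
        have hcarddle : d.support.card ≤ s + 1 := by
          have := Finset.card_le_card hsd
          omega
        have hunion : d.support.card = c₁.support.card + c₂.support.card := by
          rw [hsuppu]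
          exact Finset.card_union_of_disjoint (disjoint_iff_disjoint_support.mp hdisj)
        have hcardc₂ : c₂.support.card ≤ fl c₂ + 1 := by omega
        have hcyc₂ : IsCycle c₂ ∨ c₂ = 1 := cycle_or_one_of_card hcardc₂
        have hx₀c₁ : x₀ ∈ c₁.support := by
          rw [hc₁]
          exact mem_support_cycleOf_iff.mpr ⟨Perm.SameCycle.refl _ _, hx₀d⟩
        have hcnt₁ := count_fix IH (Or.inl hc₁cyc) (by omega) x₀ (fun hx => absurd hx₀c₁ hx)
        rw [if_pos hx₀c₁] at hcnt₁
        rw [hcnt₁, IH (fl c₂) (by omega) c₂ hcyc₂ rfl]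
        have h6 : fl c₁ = kv - 1 := by omega
        have h7 : fl c₂ + 1 = s + 1 - kv := by omega
        rw [h6, h7]
    -- final assembly
    rw [hsum]
    have hL : ∑ k : Fin (s+1), Nat.card {w : Perm α // absLeF w c ∧ w x₀ = e k}
        = ∑ k : Fin (s+1), (if (k : ℕ) = 0 then catalan s * catalan 0
            else catalan ((k : ℕ) - 1) * catalan (s + 1 - (k : ℕ))) := by
      refine Finset.sum_congr rfl (fun k _ => ?_)
      by_cases hk : (k : ℕ) = 0
      · rw [if_pos hk]
        have hk0 : k = 0 := Fin.ext hk
        rw [hk0, hfib0, catalan_zero, mul_one]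
      · rw [if_neg hk]
        exact hfibk k (by omega)
    rw [hL]
    rw [Fin.sum_univ_eq_sum_range
      (fun j => if j = 0 then catalan s * catalan 0 else catalan (j - 1) * catalan (s + 1 - j))
      (s+1)]
    rw [catalan_succ]
    rw [Fin.sum_univ_eq_sum_range (fun i => catalan i * catalan (s - i)) (s+1)]
    rw [Finset.sum_range_succ' _ s, Finset.sum_range_succ _ s]
    have hT0 : (if 0 = 0 then catalan s * catalan 0 else catalan (0 - 1) * catalan (s + 1 - 0))
        = catalan s * catalan 0 := by rw [if_pos rfl]
    rw [hT0]
    have hTs : ∀ j ∈ Finset.range s,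
        (if j + 1 = 0 then catalan s * catalan 0
          else catalan (j + 1 - 1) * catalan (s + 1 - (j + 1)))
        = catalan j * catalan (s - j) := by
      intro j _
      rw [if_neg (by omega)]
      have e1 : j + 1 - 1 = j := by omega
      have e2 : s + 1 - (j + 1) = s - j := by omega
      rw [e1, e2]
    rw [Finset.sum_congr rfl hTs]
    have e3 : s - s = 0 := by omega
    rw [e3]

section Bridge

lemma absLen_eq_fl {N : ℕ} (w : Perm (Fin N)) : absLen w = fl w := by
  have hne : {k | ∃ l : List (Perm (Fin N)), l.length = k ∧
      (∀ t ∈ l, ∃ a b, a ≠ b ∧ t = Equiv.swap a b) ∧ w = l.prod}.Nonempty := by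
    obtain ⟨l, hsl, hp, hlen⟩ := exists_word w
    exact ⟨fl w, l, hlen, hsl, hp.symm⟩
  apply le_antisymm
  · obtain ⟨l, hsl, hp, hlen⟩ := exists_word w
    exact Nat.sInf_le ⟨l, hlen, hsl, hp.symm⟩
  · obtain ⟨l, hlen, hsl, hp⟩ := Nat.sInf_mem hne
    calc fl w = fl l.prod := by rw [← hp]
    _ ≤ l.length := fl_prod_le l hsl
    _ = absLen w := hlen

lemma absLe_iff_absLeF {N : ℕ} (v w : Perm (Fin N)) : absLe v w ↔ absLeF v w := by
  unfold absLe absLeF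
  rw [absLen_eq_fl, absLen_eq_fl, absLen_eq_fl]

end Bridge

section Extend

lemma isCycle_extend {g : Perm α} {a b : α} (hg : IsCycle g) (ha : a ∈ g.support)
    (hb : b ∉ g.support) :
    IsCycle (g * Equiv.swap a b) ∧ (g * Equiv.swap a b).support = insert b g.support := by
  have hab : a ≠ b := fun h => hb (h ▸ ha)
  have hga : g a ∈ g.support := apply_mem_support.mpr ha
  have hgb : g b = b := notMem_support.mp hb
  have hsupp : (g * Equiv.swap a b).support = insert b g.support := by
    ext x
    rw [mem_support, Finset.mem_insert, mul_apply]
    by_cases hxb : x = b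
    · subst hxb
      rw [Equiv.swap_apply_right]
      constructor
      · intro _; left; rfl
      · intro _
        intro hcontra
        rw [hcontra] at hga
        exact hb hga
    · by_cases hxa : x = a
      · subst hxa
        rw [Equiv.swap_apply_left, hgb]
        constructor
        · intro _; right; exact ha
        · intro _; exact Ne.symm hab
      · rw [Equiv.swap_apply_of_ne_of_ne hxa hxb]
        constructor
        · intro h; right; exact mem_support.mpr h
        · intro h
          rcases h with h | h
          · exact absurd h hxb
          · exact mem_support.mp h
  have hninv : ¬ (g⁻¹).SameCycle a b := by
    intro hsc
    have := sameCycle_mem_support hsc.symm (Ne.symm hab)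
    rw [support_inv] at this
    exact hb this
  have hinvinv : (g * Equiv.swap a b)⁻¹ = Equiv.swap a b * g⁻¹ := by
    rw [mul_inv_rev, Equiv.swap_inv]
  have hm3 : (g * Equiv.swap a b).SameCycle a b := by
    rw [← sameCycle_inv, hinvinv]
    exact sameCycle_swap_mul_self hab hninv
  have hm2 : ∀ x y, g.SameCycle x y → (g * Equiv.swap a b).SameCycle x y := by
    intro x y hsc
    rw [← sameCycle_inv, hinvinv]
    refine sameCycle_swap_mul_mono hab hninv ?_
    rwa [sameCycle_inv]
  refine ⟨?_, hsupp⟩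
  refine ⟨a, ?_, ?_⟩
  · have : a ∈ (g * Equiv.swap a b).support := by
      rw [hsupp]; exact Finset.mem_insert_of_mem ha
    exact mem_support.mp this
  · intro y hy
    have hy' : y ∈ insert b g.support := by
      rw [← hsupp]; exact mem_support.mpr hy
    rcases Finset.mem_insert.mp hy' with rfl | hy2
    · exact hm3
    · exact hm2 a y (hg.sameCycle (mem_support.mp ha) (mem_support.mp hy2))

lemma map_support_eq {σ : Perm α} {S : Finset α} (h : σ.support ⊆ S) :
    S.map σ.toEmbedding = S := by
  have hsub : S.map σ.toEmbedding ⊆ S := by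
    intro x hx
    obtain ⟨y, hy, rfl⟩ := Finset.mem_map.mp hx
    show σ y ∈ S
    by_cases hys : y ∈ σ.support
    · exact h (apply_mem_support.mpr hys)
    · rw [notMem_support.mp hys]; exact hy
  exact Finset.eq_of_subset_of_card_le hsub (le_of_eq (Finset.card_map _).symm)

end Extend

section Coxeter

lemma coxeter_aux (n : ℕ) (m : ℕ) (hm1 : 1 ≤ m) (hmn : m ≤ n) :
    ∀ l : List (Fin n), l.Nodup → (∀ i : Fin n, i ∈ l ↔ (i : ℕ) < m) →
    IsCycle (l.map (adjSwap n)).prod ∧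
    (l.map (adjSwap n)).prod.support
      = Finset.univ.filter (fun j : Fin (n+1) => (j : ℕ) ≤ m) := by
  induction m with
  | zero => omega
  | succ m ihm =>
  rcases Nat.eq_zero_or_pos m with rfl | hm
  · -- base case : m + 1 = 1
    intro l hnd hmem
    have h0n : 0 < n := hmn
    have h00 : ((⟨0, h0n⟩ : Fin n) : ℕ) = 0 := rfl
    have h1 : (⟨0, h0n⟩ : Fin n) ∈ l := (hmem _).mpr (by omega)
    have hl : l = [⟨0, h0n⟩] := by
      cases l with
      | nil => exact absurd h1 (List.not_mem_nil)
      | cons a l' =>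
        have ha : a = ⟨0, h0n⟩ := by
          have := (hmem a).mp List.mem_cons_self
          exact Fin.ext (by omega)
        
        subst ha
        have hl' : l' = [] := by
          rw [List.eq_nil_iff_forall_not_mem]
          intro x hx
          have hx1 : x = (⟨0, h0n⟩ : Fin n) := by
            have := (hmem x).mp (List.mem_cons_of_mem _ hx)
            exact Fin.ext (by omega)
          
          subst hx1
          exact (List.nodup_cons.mp hnd).1 hx
        rw [hl']
    subst hl
    have hne01 : (⟨0, h0n⟩ : Fin n).castSucc ≠ (⟨0, h0n⟩ : Fin n).succ :=
      ne_of_lt (Fin.castSucc_lt_succ)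
    constructor
    · simp only [List.map_cons, List.map_nil, List.prod_cons, List.prod_nil, mul_one]
      exact isCycle_swap hne01
    · simp only [List.map_cons, List.map_nil, List.prod_cons, List.prod_nil, mul_one]
      show (Equiv.swap _ _).support = _
      rw [support_swap hne01]
      ext j
      simp only [Finset.mem_insert, Finset.mem_singleton, Finset.mem_filter, Finset.mem_univ,
        true_and, Fin.ext_iff, Fin.coe_castSucc, Fin.val_succ]
      omega
  · -- inductive step for m + 1 with m ≥ 1
    intro l hnd hmem
    set istar : Fin n := ⟨m, by omega⟩ with histar
    have histv : (istar : ℕ) = m := rfl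
    have hstar : istar ∈ l := (hmem _).mpr (by omega)
    obtain ⟨l₁, l₂, rfl⟩ := List.append_of_mem hstar
    rw [List.nodup_append] at hnd
    obtain ⟨hnd₁, hnd₂', hdisj⟩ := hnd
    rw [List.nodup_cons] at hnd₂'
    obtain ⟨hstar₂, hnd₂⟩ := hnd₂'
    have hstar₁ : istar ∉ l₁ := fun hc => hdisj _ hc _ List.mem_cons_self rfl
    have hmem' : ∀ i : Fin n, i ∈ l₂ ++ l₁ ↔ (i : ℕ) < m := by
      intro i
      rw [List.mem_append]
      constructor
      · intro h
        have hin : i ∈ l₁ ++ istar :: l₂ := by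
          rcases h with h | h
          · exact List.mem_append_right _ (List.mem_cons_of_mem _ h)
          · exact List.mem_append_left _ h
        have hlt := (hmem i).mp hin
        have hne : i ≠ istar := by
          rintro rfl
          rcases h with h | h
          · exact hstar₂ h
          · exact hstar₁ h
        have : (i : ℕ) ≠ m := fun hc => hne (Fin.ext (by omega))
        omega
      · intro h
        have hin := (hmem i).mpr (by omega)
        rcases List.mem_append.mp hin with h1 | h1
        · right; exact h1
        · rcases List.mem_cons.mp h1 with rfl | h2
          · exfalso; omega
          · left; exact h2
    have hnd' : (l₂ ++ l₁).Nodup := by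
      rw [List.nodup_append]
      exact ⟨hnd₂, hnd₁, fun a ha b hb hab => hdisj b hb a (List.mem_cons_of_mem _ ha) hab.symm⟩
    obtain ⟨hg₀cyc, hg₀supp⟩ := ihm hm (by omega) (l₂ ++ l₁) hnd' hmem'
    set Q := (l₂.map (adjSwap n)).prod with hQ
    set P := (l₁.map (adjSwap n)).prod with hP
    have hg₀ : ((l₂ ++ l₁).map (adjSwap n)).prod = Q * P := by
      rw [List.map_append, List.prod_append]
    rw [hg₀] at hg₀cyc hg₀supp
    set a : Fin (n+1) := istar.castSucc with haa
    set b : Fin (n+1) := istar.succ with hbb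
    have hfi : adjSwap n istar = Equiv.swap a b := rfl
    have hav : (a : ℕ) = m := rfl
    have hbv : (b : ℕ) = m + 1 := rfl
    have hmemA : a ∈ (Q * P).support := by
      rw [hg₀supp, Finset.mem_filter]
      exact ⟨Finset.mem_univ _, by omega⟩
    have hmemB : b ∉ (Q * P).support := by
      rw [hg₀supp, Finset.mem_filter]
      push_neg
      intro _
      omega
    obtain ⟨hgcyc, hgsupp⟩ := isCycle_extend hg₀cyc hmemA hmemB
    have hprod : ((l₁ ++ istar :: l₂).map (adjSwap n)).prod
        = Q⁻¹ * (Q * P * Equiv.swap a b) * Q := by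
      rw [List.map_append, List.prod_append, List.map_cons, List.prod_cons, hfi]
      group
      rfl
    have hQsupp : Q.support ⊆ Finset.univ.filter (fun j : Fin (n+1) => (j : ℕ) ≤ m + 1) := by
      rw [hQ]
      refine support_list_prod_le _ _ ?_
      intro t ht
      obtain ⟨i, hi, rfl⟩ := List.mem_map.mp ht
      have hiv : (i : ℕ) < m + 1 := (hmem i).mp (List.mem_append_right _ (List.mem_cons_of_mem _ hi))
      show (adjSwap n i).support ⊆ _
      unfold adjSwap
      rw [support_swap (ne_of_lt (Fin.castSucc_lt_succ))]
      intro z hz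
      simp only [Finset.mem_insert, Finset.mem_singleton] at hz
      rw [Finset.mem_filter]
      refine ⟨Finset.mem_univ _, ?_⟩
      rcases hz with rfl | rfl
      · simp only [Fin.coe_castSucc]; omega
      · simp only [Fin.val_succ]; omega
    have hsuppfin : (Q * P * Equiv.swap a b).support
        = Finset.univ.filter (fun j : Fin (n+1) => (j : ℕ) ≤ m + 1) := by
      rw [hgsupp, hg₀supp]
      ext j
      simp only [Finset.mem_insert, Finset.mem_filter, Finset.mem_univ, true_and, Fin.ext_iff]
      rw [hbv]
      omega
    constructor
    · rw [hprod]
      have := hgcyc.conj (g := Q⁻¹)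
      rwa [inv_inv] at this
    · rw [hprod]
      have hconj : Q⁻¹ * (Q * P * Equiv.swap a b) * Q
          = Q⁻¹ * (Q * P * Equiv.swap a b) * (Q⁻¹)⁻¹ := by rw [inv_inv]
      rw [hconj, support_conj, hsuppfin]
      refine map_support_eq ?_
      rw [support_inv]
      exact hQsupp

end Coxeter

end NCAux

/-- The number of `c`-noncrossing partitions of `S_{n+1}` (the interval `[e,c]` in the
absolute order) is the Catalan number `C_{n+1}`. -/
theorem stmt13 (n : ℕ) (c : Equiv.Perm (Fin (n+1))) (hc : IsStdCoxeter n c) :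
    Nat.card {w : Equiv.Perm (Fin (n+1)) // absLe w c} = catalan (n+1) := by
  obtain ⟨l, hnd, hall, hceq⟩ := hc
  have hiff : ∀ w : Equiv.Perm (Fin (n+1)), absLe w c ↔ NCAux.absLeF w c :=
    fun w => NCAux.absLe_iff_absLeF w c
  rw [Nat.card_congr (Equiv.subtypeEquivRight hiff)]
  rcases Nat.eq_zero_or_pos n with rfl | hn
  · have hl : l = [] := List.eq_nil_iff_forall_not_mem.mpr (fun a => (IsEmpty.false a).elim)
    subst hl
    simp only [List.map_nil, List.prod_nil] at hceq
    subst hceq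
    rw [NCAux.count_one']
    exact catalan_one.symm
  · have hcox := NCAux.coxeter_aux n n hn (le_refl n) l hnd
      (fun i => ⟨fun _ => i.isLt, fun _ => hall i⟩)
    rw [← hceq] at hcox
    obtain ⟨hcyc, hsupp⟩ := hcox
    have hsu : c.support = Finset.univ := by
      rw [hsupp]
      ext j
      simp only [Finset.mem_filter, Finset.mem_univ, true_and, iff_true]
      have := j.isLt
      omega
    have hflc : NCAux.fl c = n := by
      have h1 := NCAux.fl_isCycle hcyc
      rw [hsu, Finset.card_univ, Fintype.card_fin] at h1
      omega
    exact NCAux.master n c (Or.inl hcyc) hflc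
end

section
/- Let c be a standard Coxeter element of S_n, s_k = (k,k+1) initial in c, and c' = s_k c s_k. Write the cycle notation of c as (a_1,...,a_n) with a_1 = k and a_{k+1} = k+1. Then {a_1,...,a_k} = {1,...,k} and {a_{k+1},...,a_n} = {k+1,...,n}. -/
/-- The Coxeter length = number of inversions of a permutation. -/
def invLen {n : ℕ} (w : Equiv.Perm (Fin n)) : ℕ :=
  (Finset.univ.filter fun p : Fin n × Fin n => p.1 < p.2 ∧ w p.2 < w p.1).card

lemma adjSwap_le {n : ℕ} {i k : Fin n} (hik : i ≠ k) (x : Fin (n+1)) :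
    adjSwap n i x ≤ k.castSucc ↔ x ≤ k.castSucc := by
  have hik' : i.val ≠ k.val := fun h => hik (Fin.ext h)
  unfold adjSwap
  rw [Equiv.swap_apply_def]
  split_ifs with h1 h2
  · subst h1; simp only [Fin.le_def, Fin.val_succ, Fin.coe_castSucc]; omega
  · subst h2; simp only [Fin.le_def, Fin.val_succ, Fin.coe_castSucc]; omega
  · exact Iff.rfl

lemma prodBlock {n : ℕ} {k : Fin n} : ∀ {m : List (Fin n)}, k ∉ m →
    ∀ x, ((m.map (adjSwap n)).prod x ≤ k.castSucc ↔ x ≤ k.castSucc)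
  | [], _, x => by simp
  | i :: m, h, x => by
    simp only [List.map_cons, List.prod_cons, Equiv.Perm.mul_apply]
    rw [adjSwap_le (fun hik => h (by rw [← hik]; exact List.mem_cons_self))]
    exact prodBlock (fun hm => h (List.mem_cons_of_mem _ hm)) x

lemma prodFix {n : ℕ} {x : Fin (n+1)} : ∀ {m : List (Fin n)},
    (∀ i ∈ m, i.castSucc ≠ x ∧ i.succ ≠ x) → (m.map (adjSwap n)).prod x = x
  | [], _ => by simp
  | i :: m, h => by
    simp only [List.map_cons, List.prod_cons, Equiv.Perm.mul_apply]
    rw [prodFix (fun j hj => h j (List.mem_cons_of_mem _ hj))]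
    exact Equiv.swap_apply_of_ne_of_ne (h i (List.mem_cons_self)).1.symm
      (h i (List.mem_cons_self)).2.symm

lemma swap_mono {N : ℕ} {i j a b : Fin N} (hij : i.val + 1 = j.val) (hab : a < b)
    (hne : ¬(a = i ∧ b = j)) : Equiv.swap i j a < Equiv.swap i j b := by
  have key : ∀ x : Fin N, (Equiv.swap i j x).val =
      if x.val = i.val then j.val else if x.val = j.val then i.val else x.val := by
    intro x
    rcases eq_or_ne x i with rfl | hxi
    · simp [Equiv.swap_apply_left]
    · rcases eq_or_ne x j with rfl | hxj
      · rw [Equiv.swap_apply_right, if_neg (by omega), if_pos rfl]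
      · rw [Equiv.swap_apply_of_ne_of_ne hxi hxj,
          if_neg (fun h => hxi (Fin.ext h)), if_neg (fun h => hxj (Fin.ext h))]
  have hne' : a.val ≠ i.val ∨ b.val ≠ j.val := by
    by_contra hc
    push_neg at hc
    exact hne ⟨Fin.ext hc.1, Fin.ext hc.2⟩
  rw [Fin.lt_def] at hab ⊢
  rw [key, key]
  split_ifs <;> omega

theorem Equiv.Perm.apply_inv_self {α : Type*} (f : Equiv.Perm α) (x : α) : f (f⁻¹ x) = x :=
  Equiv.apply_symm_apply f x

theorem Equiv.Perm.inv_apply_self {α : Type*} (f : Equiv.Perm α) (x : α) : f⁻¹ (f x) = x :=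
  Equiv.symm_apply_apply f x

lemma invLen_le {n : ℕ} (k : Fin n) (c : Equiv.Perm (Fin (n+1)))
    (h : c⁻¹ k.castSucc < c⁻¹ k.succ) : invLen c ≤ invLen (adjSwap n k * c) := by
  apply Finset.card_le_card
  intro p hp
  simp only [Finset.mem_filter, Finset.mem_univ, true_and] at hp ⊢
  refine ⟨hp.1, ?_⟩
  have hne : ¬(c p.2 = k.castSucc ∧ c p.1 = k.succ) := by
    rintro ⟨h1, h2⟩
    have e1 : p.2 = c⁻¹ k.castSucc := by rw [← h1, Equiv.Perm.inv_apply_self]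
    have e2 : p.1 = c⁻¹ k.succ := by rw [← h2, Equiv.Perm.inv_apply_self]
    have hlt := hp.1
    rw [e1, e2] at hlt
    exact absurd h (not_lt.mpr hlt.le)
  have := swap_mono (show k.castSucc.val + 1 = k.succ.val by simp) hp.2 hne
  simpa [adjSwap, Equiv.Perm.mul_apply] using this

open Fin.NatCast Fin.CommRing

/-- Let `c` be a standard Coxeter element of `S_{n+1}` with `s_k` initial in `c`, and
write the cycle notation of `c` as `(a₁, …)` starting at `a₁ = k` (formally: `a` is a
bijection with `a 0 = k` and `c (a i) = a (i+1)` cyclically).  Then the entry at index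
`k+1` is `k+1`, the first `k+1` entries are exactly `{1, …, k+1}` (the elements `≤ k`),
and the remaining entries are exactly the elements `> k`. -/
theorem stmt16 (n : ℕ) (c : Equiv.Perm (Fin (n+1))) (hc : IsStdCoxeter n c)
    (k : Fin n) (hk : invLen (adjSwap n k * c) < invLen c)
    (a : Fin (n+1) ≃ Fin (n+1)) (ha0 : a 0 = k.castSucc)
    (hacyc : ∀ i, c (a i) = a (i + 1)) :
    a k.succ = k.succ ∧ ∀ i : Fin (n+1), (a i ≤ k.castSucc ↔ i ≤ k.castSucc) := by
  obtain ⟨l, hnd, hml, hprod⟩ := hc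
  obtain ⟨l1, l2, rfl⟩ := List.append_of_mem (hml k)
  rw [List.nodup_append] at hnd
  obtain ⟨hnd1, hnd2, hdisj⟩ := hnd
  have hkl1 : k ∉ l1 := fun h => hdisj k h k List.mem_cons_self rfl
  have hkl2 : k ∉ l2 := (List.nodup_cons.mp hnd2).1
  have hdisj' : ∀ i ∈ l1, i ∉ l2 := fun i hi hi2 => hdisj i hi i (List.mem_cons_of_mem _ hi2) rfl
  set A := (l1.map (adjSwap n)).prod with hAdef
  set B := (l2.map (adjSwap n)).prod with hBdef
  have hcdef : c = A * (adjSwap n k * B) := by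
    rw [hprod, List.map_append, List.prod_append, List.map_cons, List.prod_cons]
  have hsinv : (adjSwap n k)⁻¹ = adjSwap n k := by unfold adjSwap; exact Equiv.swap_inv _ _
  have hcfun : ∀ x, c x = A (adjSwap n k (B x)) := fun x => by rw [hcdef]; rfl
  have hcinvx : ∀ x, c⁻¹ x = B⁻¹ (adjSwap n k (A⁻¹ x)) := fun x => by
    rw [hcdef, mul_inv_rev, mul_inv_rev, hsinv]; rfl
  have hsK : adjSwap n k k.castSucc = k.succ := by
    unfold adjSwap; exact Equiv.swap_apply_left _ _
  have hsK1 : adjSwap n k k.succ = k.castSucc := by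
    unfold adjSwap; exact Equiv.swap_apply_right _ _
  have hsother : ∀ x, x ≠ k.castSucc → x ≠ k.succ → adjSwap n k x = x := fun x h1 h2 => by
    unfold adjSwap; exact Equiv.swap_apply_of_ne_of_ne h1 h2
  have hKK1 : ¬ (k.succ ≤ k.castSucc) := (Fin.castSucc_lt_succ (i := k)).not_ge
  have hAle : ∀ x, A x ≤ k.castSucc ↔ x ≤ k.castSucc := prodBlock hkl1
  have hBle : ∀ x, B x ≤ k.castSucc ↔ x ≤ k.castSucc := prodBlock hkl2
  have hAile : ∀ x, A⁻¹ x ≤ k.castSucc ↔ x ≤ k.castSucc := fun x => by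
    conv_rhs => rw [← Equiv.Perm.apply_inv_self A x]
    exact (hAle _).symm
  have hBile : ∀ x, B⁻¹ x ≤ k.castSucc ↔ x ≤ k.castSucc := fun x => by
    conv_rhs => rw [← Equiv.Perm.apply_inv_self B x]
    exact (hBle _).symm
  -- Step 2: A fixes k.castSucc and k.succ
  have hfixA : A k.castSucc = k.castSucc ∧ A k.succ = k.succ := by
    by_contra hcon
    refine absurd hk (not_lt.mpr (invLen_le k c ?_))
    rw [hcinvx, hcinvx]
    by_cases h1 : A k.castSucc = k.castSucc
    · have h2 : A k.succ ≠ k.succ := fun h => hcon ⟨h1, h⟩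
      have hex : ∃ i ∈ l1, i.castSucc = k.succ := by
        by_contra hax
        push_neg at hax
        exact h2 (prodFix fun i hi =>
          ⟨hax i hi, fun hsc => absurd (by rwa [Fin.succ_inj.mp hsc] at hi) hkl1⟩)
      obtain ⟨i, hil1, hiK1⟩ := hex
      have hBK1 : B k.succ = k.succ := prodFix fun j hj =>
        ⟨fun hc1 => hdisj' i hil1 (by
            rwa [Fin.castSucc_inj.mp (hc1.trans hiK1.symm)] at hj),
         fun hc2 => hkl2 (by rwa [Fin.succ_inj.mp hc2] at hj)⟩
      have hBiK1 : B⁻¹ k.succ = k.succ := by nth_rewrite 1 [← hBK1]; exact Equiv.Perm.inv_apply_self _ _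
      have hAiK : A⁻¹ k.castSucc = k.castSucc := by nth_rewrite 1 [← h1]; exact Equiv.Perm.inv_apply_self _ _
      have hvle : ¬ A⁻¹ k.succ ≤ k.castSucc := fun h => hKK1 ((hAile _).mp h)
      have hvne : A⁻¹ k.succ ≠ k.succ := fun h =>
        h2 (by have := congrArg A h; rw [Equiv.Perm.apply_inv_self] at this; exact this.symm)
      have hvK : A⁻¹ k.succ ≠ k.castSucc := fun h => hvle (h ▸ le_refl _)
      rw [hAiK, hsK, hsother _ hvK hvne, hBiK1]
      have hw1 : ¬ B⁻¹ (A⁻¹ k.succ) ≤ k.castSucc := fun h => hvle ((hBile _).mp h)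
      have hw2 : B⁻¹ (A⁻¹ k.succ) ≠ k.succ := fun h => hvne (by
        have := congrArg B h; rwa [Equiv.Perm.apply_inv_self, hBK1] at this)
      simp only [Fin.lt_def, Fin.le_def, Fin.val_succ, Fin.coe_castSucc, Ne,
        Fin.ext_iff] at hw1 hw2 ⊢
      omega
    · have hex : ∃ i ∈ l1, i.succ = k.castSucc := by
        by_contra hax
        push_neg at hax
        exact h1 (prodFix fun i hi =>
          ⟨fun hc1 => absurd (by rwa [Fin.castSucc_inj.mp hc1] at hi) hkl1, hax i hi⟩)
      obtain ⟨i, hil1, hiK⟩ := hex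
      have hBK : B k.castSucc = k.castSucc := prodFix fun j hj =>
        ⟨fun hc1 => hkl2 (by rwa [Fin.castSucc_inj.mp hc1] at hj),
         fun hc2 => hdisj' i hil1 (by rwa [Fin.succ_inj.mp (hc2.trans hiK.symm)] at hj)⟩
      have hBiK : B⁻¹ k.castSucc = k.castSucc := by nth_rewrite 1 [← hBK]; exact Equiv.Perm.inv_apply_self _ _
      have huK : A⁻¹ k.castSucc ≠ k.castSucc := fun h =>
        h1 (by have := congrArg A h; rw [Equiv.Perm.apply_inv_self] at this; exact this.symm)
      have hule : A⁻¹ k.castSucc ≤ k.castSucc := (hAile _).mpr (le_refl _)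
      have huK1 : A⁻¹ k.castSucc ≠ k.succ := fun h => hKK1 (h ▸ hule)
      rw [hsother _ huK huK1]
      have hLle : B⁻¹ (A⁻¹ k.castSucc) ≤ k.castSucc := (hBile _).mpr hule
      have hLne : B⁻¹ (A⁻¹ k.castSucc) ≠ k.castSucc := fun h => huK (by
        have := congrArg B h; rwa [Equiv.Perm.apply_inv_self, hBK] at this)
      have hLlt : B⁻¹ (A⁻¹ k.castSucc) < k.castSucc := lt_of_le_of_ne hLle hLne
      by_cases hv : A⁻¹ k.succ = k.succ
      · rw [hv, hsK1, hBiK]; exact hLlt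
      · have hvle : ¬ A⁻¹ k.succ ≤ k.castSucc := fun h => hKK1 ((hAile _).mp h)
        have hvK : A⁻¹ k.succ ≠ k.castSucc := fun h => hvle (h ▸ le_refl _)
        rw [hsother _ hvK hv]
        have hw : ¬ B⁻¹ (A⁻¹ k.succ) ≤ k.castSucc := fun h => hvle ((hBile _).mp h)
        exact lt_trans hLlt (not_le.mp hw)
  obtain ⟨hAK, hAK1⟩ := hfixA
  -- crossing facts
  have F1 : ∀ x, x ≤ k.castSucc → ¬ c x ≤ k.castSucc → c x = k.succ := by
    intro x hx hcx'
    by_cases hBx : B x = k.castSucc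
    · rw [hcfun x, hBx, hsK, hAK1]
    · exfalso
      have h1 : B x ≤ k.castSucc := (hBle x).mpr hx
      have h2 : B x ≠ k.succ := fun h => hKK1 (h ▸ h1)
      exact hcx' (by rw [hcfun x, hsother _ hBx h2]; exact (hAle _).mpr h1)
  have F2 : ∀ x, ¬ x ≤ k.castSucc → c x ≤ k.castSucc → c x = k.castSucc := by
    intro x hx hcx'
    by_cases hBx : B x = k.succ
    · rw [hcfun x, hBx, hsK1, hAK]
    · exfalso
      have h1 : ¬ B x ≤ k.castSucc := fun h => hx ((hBle x).mp h)
      have h2 : B x ≠ k.castSucc := fun h => h1 (h ▸ le_refl _)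
      rw [hcfun x, hsother _ h2 hBx] at hcx'
      exact h1 ((hAle _).mp hcx')
  have claimA : ∀ j : Fin (n+1), j ≠ 0 → a j ≤ k.castSucc → a (j - 1) ≤ k.castSucc := by
    intro j hj haj
    by_contra h
    have hc1 : c (a (j - 1)) = a j := by
      rw [hacyc (j - 1)]
      congr 1
      ring
    have hF2 := F2 (a (j - 1)) h (hc1 ▸ haj)
    have heq : a j = a 0 := by rw [← hc1, hF2, ha0]
    exact hj (a.injective heq)
  have claimB : ∀ j : ℕ, j ≤ n → a (j : Fin (n+1)) ≤ k.castSucc →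
      ∀ i : ℕ, i ≤ j → a (i : Fin (n+1)) ≤ k.castSucc := by
    intro j
    induction j with
    | zero => intro _ h0 i hi; rw [Nat.le_zero.mp hi]; exact h0
    | succ j ih =>
      intro hjn hsucc i hi
      have hcast : ((j+1 : ℕ) : Fin (n+1)) = (j : Fin (n+1)) + 1 := by push_cast; ring
      have hne0 : ((j+1 : ℕ) : Fin (n+1)) ≠ 0 := by
        have hval : ((j+1 : ℕ) : Fin (n+1)).val = j+1 := Fin.val_cast_of_lt (by omega)
        intro h
        rw [h] at hval
        simp at hval
      have hprev : a ((j : ℕ) : Fin (n+1)) ≤ k.castSucc := by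
        have hA := claimA _ hne0 hsucc
        have hsub : ((j+1 : ℕ) : Fin (n+1)) - 1 = ((j : ℕ) : Fin (n+1)) := by
          rw [hcast]; ring
        rwa [hsub] at hA
      rcases eq_or_lt_of_le hi with h | h
      · rw [h]; exact hsucc
      · exact ih (by omega) hprev i (by omega)
  -- counting
  have h0mem : (0:ℕ) ∈ (Finset.range (n+1)).filter
      (fun j : ℕ => a ((j : ℕ) : Fin (n+1)) ≤ k.castSucc) := by
    simp only [Finset.mem_filter, Finset.mem_range]
    refine ⟨by omega, ?_⟩
    rw [Nat.cast_zero, ha0]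
  set Tn := (Finset.range (n+1)).filter (fun j : ℕ => a ((j : ℕ) : Fin (n+1)) ≤ k.castSucc) with hTn
  have hTne : Tn.Nonempty := ⟨0, h0mem⟩
  set M := Tn.max' hTne with hMdef
  have hMmem : M ∈ Tn := Tn.max'_mem hTne
  rw [hTn, Finset.mem_filter, Finset.mem_range] at hMmem
  have hMn : M ≤ n := by omega
  have hQM : a (M : Fin (n+1)) ≤ k.castSucc := hMmem.2
  have hTeq : Tn = Finset.range (M+1) := by
    ext j
    simp only [hTn, Finset.mem_filter, Finset.mem_range]
    constructor
    · rintro ⟨hj1, hj2⟩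
      have := Finset.le_max' Tn j (by rw [hTn]; simp only [Finset.mem_filter, Finset.mem_range]; exact ⟨hj1, hj2⟩)
      omega
    · intro hj
      exact ⟨by omega, claimB M hMn hQM j (by omega)⟩
  have hcard1 : Tn.card = M + 1 := by rw [hTeq, Finset.card_range]
  have hcard2 : Tn.card = k.val + 1 := by
    have hbij : Tn.card = (Finset.Iic (k.castSucc)).card := by
      apply Finset.card_bij (fun (j : ℕ) (_ : j ∈ Tn) => a ((j : ℕ) : Fin (n+1)))
      · intro j hj
        rw [hTn, Finset.mem_filter] at hj
        exact Finset.mem_Iic.mpr hj.2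
      · intro j1 h1 j2 h2 heq
        rw [hTn, Finset.mem_filter, Finset.mem_range] at h1 h2
        have hf : ((j1 : ℕ) : Fin (n+1)) = ((j2 : ℕ) : Fin (n+1)) := a.injective heq
        have := congrArg Fin.val hf
        rwa [Fin.val_cast_of_lt h1.1, Fin.val_cast_of_lt h2.1] at this
      · intro y hy
        refine ⟨(a.symm y).val, ?_, ?_⟩
        · rw [hTn, Finset.mem_filter, Finset.mem_range]
          refine ⟨(a.symm y).isLt, ?_⟩
          rw [Fin.cast_val_eq_self, Equiv.apply_symm_apply]
          exact Finset.mem_Iic.mp hy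
        · rw [Fin.cast_val_eq_self, Equiv.apply_symm_apply]
    rw [hbij, Fin.card_Iic, Fin.coe_castSucc]
  have hM : M = k.val := by omega
  have hiff : ∀ i : Fin (n+1), a i ≤ k.castSucc ↔ i ≤ k.castSucc := by
    intro i
    have hival : ((i.val : ℕ) : Fin (n+1)) = i := Fin.cast_val_eq_self i
    constructor
    · intro h
      have hmem : i.val ∈ Tn := by
        rw [hTn, Finset.mem_filter, Finset.mem_range]
        exact ⟨i.isLt, by rwa [hival]⟩
      have := Finset.le_max' Tn i.val hmem
      rw [Fin.le_def, Fin.coe_castSucc]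
      omega
    · intro h
      have hvk : i.val ≤ k.val := by
        rw [Fin.le_def, Fin.coe_castSucc] at h; exact h
      have := claimB M hMn hQM i.val (by omega)
      rwa [hival] at this
  refine ⟨?_, hiff⟩
  have h1 : k.castSucc + 1 = k.succ := by
    have hlt : k.val < n := k.isLt
    apply Fin.ext
    rw [Fin.val_add, Fin.coe_castSucc, Fin.val_succ]
    have hone : (1 : Fin (n+1)).val = 1 := by
      rw [Fin.val_one']
      exact Nat.mod_eq_of_lt (by omega)
    rw [hone]
    exact Nat.mod_eq_of_lt (by omega)
  have hc1 : c (a k.castSucc) = a k.succ := by rw [hacyc k.castSucc, h1]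
  have hle : a k.castSucc ≤ k.castSucc := (hiff _).mpr (le_refl _)
  have hnle : ¬ a k.succ ≤ k.castSucc := fun h => hKK1 ((hiff k.succ).mp h)
  rw [← hc1]
  exact F1 _ hle (by rw [hc1]; exact hnle)
end
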